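/- arXiv:0905.2191 — 5 statements merged into one kernel-verified Lean document; each statement's English description precedes it below -/
import Mathlib

section
/- Let I ⊆ S be a homogeneous ideal and ψ = (ψ_1,…,ψ_j) a weakly normalized system of homogeneous elements of I. Then: (1) the condition 'deg ψ_i = ν^i(I) for i = 1,…,j' holds if and only if for every i = 1,…,j the element ψ_i has minimal degree among homogeneous elements of I not lying in ⟨ψ_1,…,ψ_{i−1}⟩; (2) if these equivalent conditions hold, then ψ can be extended to a standard base (ψ_1,…,ψ_j,ψ_{j+1},…,ψ_m) of I. -/
open MvPolynomial

/-- `nuSeq I i` is the invariant `ν^i(I)` of Hironaka: the supremum (in `ℕ∞`) of those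
`ν ∈ ℕ` for which there exist homogeneous elements `φ_1, …, φ_{i-1} ∈ I` with
`S_μ ∩ I = S_μ ∩ ⟨φ_1, …, φ_{i-1}⟩` for all `μ < ν`. -/
noncomputable def nuSeq {k : Type*} [Field k] {n : ℕ}
    (I : Ideal (MvPolynomial (Fin n) k)) (i : ℕ) : ℕ∞ :=
  sSup ((fun ν : ℕ => (ν : ℕ∞)) ''
    {ν : ℕ | ∃ φ : Fin (i - 1) → MvPolynomial (Fin n) k,
      (∀ j, φ j ∈ I) ∧ (∀ j, ∃ d : ℕ, (φ j).IsHomogeneous d) ∧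
      ∀ μ : ℕ, μ < ν →
        (homogeneousSubmodule (Fin n) k μ : Set (MvPolynomial (Fin n) k)) ∩ I =
        (homogeneousSubmodule (Fin n) k μ : Set (MvPolynomial (Fin n) k)) ∩
          Ideal.span (Set.range φ)})

section Helpers

variable {k : Type*} [Field k] {n : ℕ}
local notation "S" => MvPolynomial (Fin n) k

lemma hcSelf {p : S} {e : ℕ} (hp : p.IsHomogeneous e) :
    homogeneousComponent e p = p := by
  rw [homogeneousComponent_of_mem ((mem_homogeneousSubmodule e p).2 hp), if_pos rfl]

lemma hcMul {b c : S} {m e : ℕ} (hb : b.IsHomogeneous m) :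
    homogeneousComponent e (c * b) =
      if m ≤ e then homogeneousComponent (e - m) c * b else 0 := by
  conv_lhs => rw [← sum_homogeneousComponent c, Finset.sum_mul, map_sum]
  have hterm : ∀ i : ℕ, homogeneousComponent e (homogeneousComponent i c * b) =
      if e = i + m then homogeneousComponent i c * b else 0 := by
    intro i
    exact homogeneousComponent_of_mem ((mem_homogeneousSubmodule _ _).2
      ((homogeneousComponent_isHomogeneous i c).mul hb))
  by_cases hme : m ≤ e
  · rw [if_pos hme]
    rw [Finset.sum_congr rfl fun i _ => hterm i]
    rw [Finset.sum_eq_single (e - m)]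
    · rw [if_pos (by omega)]
    · intro i _ hi; rw [if_neg (by omega)]
    · intro h
      rw [Finset.mem_range, not_lt] at h
      rw [if_pos (by omega), homogeneousComponent_eq_zero _ _ (by omega), zero_mul]
  · rw [if_neg hme]
    rw [Finset.sum_congr rfl fun i _ => hterm i]
    apply Finset.sum_eq_zero
    intro i _; rw [if_neg (by omega)]

lemma exchange [DecidableEq (MvPolynomial (Fin n) k)] (A : Set S) (hA : ∀ a ∈ A, ∃ m, MvPolynomial.IsHomogeneous a m)
    (x : S) (e : ℕ) (hx : x.IsHomogeneous e)
    (B : Finset S) (hB : ∀ b ∈ B, ∃ m, MvPolynomial.IsHomogeneous b m ∧ (m < e → b ∈ Ideal.span A))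
    (hmem : x ∈ Ideal.span (A ∪ ↑B)) (hnx : x ∉ Ideal.span A) :
    ∃ b0 ∈ B, b0 ∈ Ideal.span (A ∪ {x} ∪ ↑(B.erase b0)) := by
  classical
  obtain ⟨c, hsupp, hsum⟩ := Submodule.mem_span_set.1 hmem
  set K : Finset S := c.support.filter (fun g => g ∉ A ∧ g.IsHomogeneous e) with hK
  have hKB : ∀ g ∈ K, g ∈ B := by
    intro g hg
    rw [hK, Finset.mem_filter] at hg
    rcases hsupp hg.1 with h | h
    · exact absurd h hg.2.1
    · exact h
  have hx2 : x = ∑ g ∈ c.support, homogeneousComponent e (c g * g) := by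
    conv_lhs => rw [← hcSelf hx, ← hsum]
    rw [Finsupp.sum, map_sum]
    exact Finset.sum_congr rfl fun g _ => by rw [smul_eq_mul]
  have key : x - ∑ g ∈ K, (C (coeff 0 (c g)) : S) * g ∈ Ideal.span A := by
    rw [hK, Finset.sum_filter, hx2, ← Finset.sum_sub_distrib]
    apply Submodule.sum_mem
    intro g hg
    by_cases hgA : g ∈ A
    · rw [if_neg (by tauto), sub_zero]
      obtain ⟨m, hm⟩ := hA g hgA
      rw [hcMul hm]
      split
      · exact Ideal.mul_mem_left _ _ (Ideal.subset_span hgA)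
      · exact zero_mem _
    · have hgB : g ∈ B := by
        rcases hsupp hg with h | h
        · exact absurd h hgA
        · exact h
      obtain ⟨m, hm, hlow⟩ := hB g hgB
      by_cases hge : g.IsHomogeneous e
      · rw [if_pos ⟨hgA, hge⟩, hcMul hge, if_pos le_rfl, Nat.sub_self,
          homogeneousComponent_zero, sub_self]
        exact zero_mem _
      · rw [if_neg (by tauto), sub_zero, hcMul hm]
        split
        · rename_i hme
          have : m < e := lt_of_le_of_ne hme (by rintro rfl; exact hge hm)
          exact Ideal.mul_mem_left _ _ (hlow this)
        · exact zero_mem _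
  have hex : ∃ b0 ∈ K, coeff 0 (c b0) ≠ 0 := by
    by_contra h
    push_neg at h
    have : ∑ g ∈ K, (C (coeff 0 (c g)) : S) * g = 0 :=
      Finset.sum_eq_zero fun g hg => by rw [h g hg, map_zero, zero_mul]
    rw [this, sub_zero] at key
    exact hnx key
  obtain ⟨b0, hb0K, hne⟩ := hex
  refine ⟨b0, hKB b0 hb0K, ?_⟩
  set M := Ideal.span (A ∪ {x} ∪ ↑(B.erase b0)) with hM
  have hAM : Ideal.span A ≤ M := Ideal.span_mono (by intro a ha; left; left; exact ha)
  have hxM : x ∈ M := Ideal.subset_span (by left; right; rfl)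
  have hsplit : (C (coeff 0 (c b0)) : S) * b0 =
      x - (x - ∑ g ∈ K, (C (coeff 0 (c g)) : S) * g) - ∑ g ∈ K.erase b0, (C (coeff 0 (c g)) : S) * g := by
    rw [← Finset.add_sum_erase _ _ hb0K]
    ring
  have hmul : (C (coeff 0 (c b0)) : S) * b0 ∈ M := by
    rw [hsplit]
    refine sub_mem (sub_mem hxM (hAM key)) (Submodule.sum_mem _ ?_)
    intro g hg
    refine Ideal.mul_mem_left _ _ (Ideal.subset_span ?_)
    right
    rw [Finset.coe_erase]
    exact ⟨hKB g (Finset.mem_of_mem_erase hg), Finset.ne_of_mem_erase hg⟩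
  have : b0 = (C (coeff 0 (c b0))⁻¹ : S) * ((C (coeff 0 (c b0)) : S) * b0) := by
    rw [← mul_assoc, ← C_mul, inv_mul_cancel₀ hne, C_1, one_mul]
  rw [this]
  exact Ideal.mul_mem_left _ _ hmul

lemma image_Iio_castLE {a b : ℕ} {α : Type*} (h : a ≤ b) (f : Fin b → α) (t : Fin a) :
    (fun s : Fin a => f (Fin.castLE h s)) '' Set.Iio t = f '' Set.Iio (Fin.castLE h t) := by
  ext y
  simp only [Set.mem_image, Set.mem_Iio]
  constructor
  · rintro ⟨s, hs, rfl⟩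
    exact ⟨Fin.castLE h s, by simp only [Fin.lt_def, Fin.coe_castLE]; exact Fin.lt_def.1 hs, rfl⟩
  · rintro ⟨s, hs, rfl⟩
    rw [Fin.lt_def] at hs
    exact ⟨⟨s.1, lt_of_lt_of_le hs (le_of_lt t.2)⟩, by simp only [Fin.lt_def]; exact hs,
      congrArg f (Fin.ext rfl)⟩

lemma countLemma (I : Ideal S) {N : ℕ} (χ : Fin N → S) (D : Fin N → ℕ)
    (hhom : ∀ s, (χ s).IsHomogeneous (D s))
    (hmin : ∀ t : Fin N, ∀ g e, g.IsHomogeneous e → g ∈ I → e < D t →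
      g ∈ Ideal.span (χ '' Set.Iio t))
    (hwn : ∀ t : Fin N, χ t ∉ Ideal.span (χ '' Set.Iio t)) :
    ∀ (cc : ℕ) (B : Finset S) (t : ℕ), B.card = cc →
      (∀ b ∈ B, b ∈ I ∧ ∃ m, b.IsHomogeneous m) →
      (∀ s : Fin N, χ s ∈ Ideal.span ((χ '' {s' : Fin N | (s' : ℕ) < t}) ∪ ↑B)) →
      N ≤ t + cc := by
  classical
  intro cc
  induction cc using Nat.strong_induction_on with
  | _ cc IH =>
  intro B t hcard hB hspan
  by_cases hNt : N ≤ t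
  · omega
  push_neg at hNt
  set T : Fin N := ⟨t, hNt⟩ with hT
  have hsetEq : χ '' {s' : Fin N | (s' : ℕ) < t} = χ '' Set.Iio T := by
    have h2 : {s' : Fin N | (s' : ℕ) < t} = Set.Iio T :=
      Set.ext fun s' => by simp [Set.mem_Iio, Fin.lt_def, hT]
    rw [h2]
  obtain ⟨b0, hb0B, hb0⟩ := exchange (χ '' {s' : Fin N | (s' : ℕ) < t})
    (by rintro a ⟨s, _, rfl⟩; exact ⟨D s, hhom s⟩) (χ T) (D T) (hhom T) B
    (fun b hb => by
      obtain ⟨hbI, m, hm⟩ := hB b hb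
      exact ⟨m, hm, fun hlt => by rw [hsetEq]; exact hmin T b m hm hbI hlt⟩)
    (hspan T) (by rw [hsetEq]; exact hwn T)
  have hccpos : 0 < cc := by
    rw [← hcard]
    exact Finset.card_pos.2 ⟨b0, hb0B⟩
  have hsub : Ideal.span ((χ '' {s' : Fin N | (s' : ℕ) < t}) ∪ ↑B) ≤
      Ideal.span ((χ '' {s' : Fin N | (s' : ℕ) < t + 1}) ∪ ↑(B.erase b0)) := by
    rw [Ideal.span_le]
    rintro y (⟨s, hs, rfl⟩ | hyB)
    · exact Ideal.subset_span (Or.inl ⟨s, by simp only [Set.mem_setOf_eq] at hs ⊢; omega, rfl⟩)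
    · by_cases hy : y = b0
      · subst hy
        refine Ideal.span_mono ?_ hb0
        rintro z ((⟨s, hs, rfl⟩ | hz) | hz)
        · exact Or.inl ⟨s, by simp only [Set.mem_setOf_eq] at hs ⊢; omega, rfl⟩
        · rw [Set.mem_singleton_iff] at hz
          subst hz
          exact Or.inl ⟨T, by simp [hT], rfl⟩
        · exact Or.inr hz
      · exact Ideal.subset_span (Or.inr (by
          rw [Finset.coe_erase]; exact ⟨hyB, hy⟩))
  have := IH (cc - 1) (by omega) (B.erase b0) (t + 1)
    (by rw [Finset.card_erase_of_mem hb0B, hcard])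
    (fun b hb => hB b (Finset.mem_of_mem_erase hb))
    (fun s => hsub (hspan s))
  omega

lemma range_castSucc_eq {M : ℕ} {α : Type*} (χ : Fin (M+1) → α) :
    Set.range (fun s : Fin ((M+1)-1) => χ (Fin.castSucc s)) = χ '' Set.Iio (Fin.last M) := by
  ext y
  constructor
  · rintro ⟨s, rfl⟩
    exact ⟨Fin.castSucc s, Fin.castSucc_lt_last s, rfl⟩
  · rintro ⟨s, hs, rfl⟩
    have hs' : s.1 < M := by
      simpa [Fin.lt_def] using hs
    exact ⟨⟨s.1, hs'⟩, congrArg χ (Fin.ext rfl)⟩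

lemma nu_ge (I : Ideal S) {M : ℕ} (χ : Fin (M+1) → S) (D : Fin (M+1) → ℕ)
    (hhom : ∀ s, (χ s).IsHomogeneous (D s)) (hmemI : ∀ s, χ s ∈ I)
    (hminLast : ∀ g e, g.IsHomogeneous e → g ∈ I →
      g ∉ Ideal.span (χ '' Set.Iio (Fin.last M)) → D (Fin.last M) ≤ e) :
    (D (Fin.last M) : ℕ∞) ≤ nuSeq I (M+1) := by
  unfold nuSeq
  apply le_sSup
  refine ⟨D (Fin.last M), ⟨fun s : Fin ((M+1)-1) => χ (Fin.castSucc s),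
    fun s => hmemI _, fun s => ⟨D (Fin.castSucc s), hhom _⟩, ?_⟩, rfl⟩
  intro μ hμ
  rw [range_castSucc_eq χ]
  ext y
  simp only [Set.mem_inter_iff, SetLike.mem_coe]
  constructor
  · rintro ⟨hy1, hy2⟩
    refine ⟨hy1, ?_⟩
    by_contra hy3
    exact absurd (hminLast y μ ((mem_homogeneousSubmodule _ _).1 hy1) hy2 hy3) (by omega)
  · rintro ⟨hy1, hy2⟩
    refine ⟨hy1, ?_⟩
    have : Ideal.span (χ '' Set.Iio (Fin.last M)) ≤ I := by
      rw [Ideal.span_le]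
      rintro z ⟨s, _, rfl⟩
      exact hmemI s
    exact this hy2

lemma nu_le (I : Ideal S) {M : ℕ} (χ : Fin (M+1) → S) (D : Fin (M+1) → ℕ)
    (hhom : ∀ s, (χ s).IsHomogeneous (D s)) (hmemI : ∀ s, χ s ∈ I)
    (hmin : ∀ t : Fin (M+1), ∀ g e, g.IsHomogeneous e → g ∈ I →
      g ∉ Ideal.span (χ '' Set.Iio t) → D t ≤ e)
    (hwn : ∀ t, χ t ∉ Ideal.span (χ '' Set.Iio t)) :
    nuSeq I (M + 1) ≤ (D (Fin.last M) : ℕ∞) := by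
  classical
  unfold nuSeq
  apply sSup_le
  rintro x ⟨ν, hν, rfl⟩
  rw [Nat.cast_le]
  by_contra hlt
  push_neg at hlt
  obtain ⟨φ, hφI, hφhom, hagree⟩ := hν
  have hminSpan : ∀ t : Fin (M+1), ∀ g e, g.IsHomogeneous e → g ∈ I → e < D t →
      g ∈ Ideal.span (χ '' Set.Iio t) := by
    intro t g e hg hgI hlt'
    by_contra hg'
    exact absurd (hmin t g e hg hgI hg') (by omega)
  have hDlast : ∀ s, D s ≤ D (Fin.last M) := by
    intro s
    rcases eq_or_lt_of_le (Fin.le_last s) with h | h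
    · rw [h]
    · refine hmin s (χ (Fin.last M)) (D (Fin.last M)) (hhom _) (hmemI _) ?_
      intro hc
      refine hwn (Fin.last M) (Ideal.span_mono ?_ hc)
      exact Set.image_mono (f := χ) (Set.Iio_subset_Iio (le_of_lt h))
  set B : Finset S := Finset.image φ Finset.univ with hB
  have hcoeB : (B : Set S) = Set.range φ := by
    rw [hB, Finset.coe_image, Finset.coe_univ, Set.image_univ]
  have hspan0 : ∀ s : Fin (M+1),
      χ s ∈ Ideal.span ((χ '' {s' : Fin (M+1) | (s' : ℕ) < 0}) ∪ ↑B) := by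
    intro s
    have h0 : {s' : Fin (M+1) | (s' : ℕ) < 0} = ∅ := by ext; simp
    rw [h0, Set.image_empty, Set.empty_union, hcoeB]
    have hsν : D s < ν := lt_of_le_of_lt (hDlast s) hlt
    have := hagree (D s) hsν
    have hmem2 : χ s ∈ (homogeneousSubmodule (Fin n) k (D s) : Set S) ∩ I :=
      ⟨(mem_homogeneousSubmodule _ _).2 (hhom s), hmemI s⟩
    rw [this] at hmem2
    exact hmem2.2
  have hcount := countLemma I χ D hhom hminSpan hwn B.card B 0 rfl
    (by
      intro b hb
      rw [hB, Finset.mem_image] at hb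
      obtain ⟨r, _, rfl⟩ := hb
      exact ⟨hφI r, ⟨_, hφhom r |>.choose_spec⟩⟩)
    hspan0
  have hcard : B.card ≤ M := by
    calc B.card ≤ (Finset.univ : Finset (Fin ((M+1)-1))).card := Finset.card_image_le
    _ = M := by simp
  omega

lemma image_Iio_castSucc {t : ℕ} {α : Type*} (f : Fin t → α) (g : α) (i : Fin t) :
    (Fin.snoc f g : Fin (t+1) → α) '' Set.Iio (Fin.castSucc i) = f '' Set.Iio i := by
  ext y
  constructor
  · rintro ⟨s, hs, rfl⟩
    have hs2 : s.1 < t := lt_trans (Fin.lt_def.1 hs) i.2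
    obtain ⟨s', rfl⟩ : ∃ s' : Fin t, s = Fin.castSucc s' := ⟨⟨s.1, hs2⟩, Fin.ext rfl⟩
    exact ⟨s', Fin.castSucc_lt_castSucc_iff.1 hs, by simp⟩
  · rintro ⟨s, hs, rfl⟩
    exact ⟨Fin.castSucc s, Fin.castSucc_lt_castSucc_iff.2 hs, Fin.snoc_castSucc _ _ _⟩

lemma image_Iio_last {t : ℕ} {α : Type*} (f : Fin t → α) (g : α) :
    (Fin.snoc f g : Fin (t+1) → α) '' Set.Iio (Fin.last t) = Set.range f := by
  ext y
  constructor
  · rintro ⟨s, hs, rfl⟩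
    obtain ⟨s', rfl⟩ : ∃ s' : Fin t, s = Fin.castSucc s' := ⟨⟨s.1, Fin.lt_def.1 hs⟩, Fin.ext rfl⟩
    exact ⟨s', by simp⟩
  · rintro ⟨s, rfl⟩
    exact ⟨Fin.castSucc s, Fin.castSucc_lt_last s, Fin.snoc_castSucc _ _ _⟩

lemma range_snoc_eq {t : ℕ} {α : Type*} (f : Fin t → α) (g : α) :
    Set.range (Fin.snoc f g : Fin (t+1) → α) = insert g (Set.range f) := by
  ext y
  constructor
  · rintro ⟨s, rfl⟩
    induction s using Fin.lastCases with
    | last => rw [Fin.snoc_last]; exact Set.mem_insert _ _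
    | cast i => rw [Fin.snoc_castSucc]; exact Set.mem_insert_of_mem _ ⟨i, rfl⟩
  · rintro (rfl | ⟨s, rfl⟩)
    · exact ⟨Fin.last t, Fin.snoc_last _ _⟩
    · exact ⟨Fin.castSucc s, Fin.snoc_castSucc _ _ _⟩

lemma monotone_snoc {t : ℕ} (d : Fin t → ℕ) (e : ℕ) (hd : Monotone d)
    (h : ∀ i, d i ≤ e) : Monotone (Fin.snoc d e : Fin (t+1) → ℕ) := by
  intro a b hab
  induction b using Fin.lastCases with
  | last =>
    induction a using Fin.lastCases with
    | last => exact le_refl _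
    | cast i => rw [Fin.snoc_castSucc, Fin.snoc_last]; exact h i
  | cast i =>
    induction a using Fin.lastCases with
    | last => exact absurd hab (not_le.2 (Fin.castSucc_lt_last i))
    | cast i' =>
      rw [Fin.snoc_castSucc, Fin.snoc_castSucc]
      exact hd (Fin.castSucc_le_castSucc_iff.1 hab)

lemma extendLemma (I : Ideal S) (hI : ∀ f ∈ I, ∀ dd : ℕ, homogeneousComponent dd f ∈ I) :
    ∀ (J : Ideal S) (t : ℕ) (ψ : Fin t → S) (d : Fin t → ℕ),
      Ideal.span (Set.range ψ) = J →
      (∀ i, (ψ i).IsHomogeneous (d i)) → (∀ i, ψ i ∈ I) →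
      (∀ i : Fin t, ∀ g e, g.IsHomogeneous e → g ∈ I →
        g ∉ Ideal.span (ψ '' Set.Iio i) → d i ≤ e) →
      (∀ i, ψ i ∉ Ideal.span (ψ '' Set.Iio i)) →
      Monotone d →
      ∃ (m : ℕ) (hjm : t ≤ m) (ψ' : Fin m → S) (d' : Fin m → ℕ),
        (∀ i : Fin t, ψ' (Fin.castLE hjm i) = ψ i) ∧
        (∀ i, (ψ' i).IsHomogeneous (d' i)) ∧ Monotone d' ∧
        (∀ i : Fin m, ψ' i ∉ Ideal.span (ψ' '' Set.Iio i)) ∧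
        Ideal.span (Set.range ψ') = I := by
  intro J
  induction J using WellFoundedGT.induction with
  | _ J IH =>
  intro t ψ d hspanJ hhom hmemI hmin hwn hmono
  by_cases hall : ∀ (g : S) (e : ℕ), g.IsHomogeneous e → g ∈ I →
      g ∈ Ideal.span (Set.range ψ)
  · refine ⟨t, le_refl t, ψ, d, fun i => by congr 1, hhom, hmono, hwn, ?_⟩
    apply le_antisymm
    · rw [Ideal.span_le]
      rintro y ⟨s, rfl⟩
      exact hmemI s
    · intro f hf
      rw [← sum_homogeneousComponent f]
      exact Submodule.sum_mem _ fun i _ =>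
        hall _ i (homogeneousComponent_isHomogeneous i f) (hI f hf i)
  · push_neg at hall
    obtain ⟨g1, e1, hg1hom, hg1I, hg1span⟩ := hall
    set E : Set ℕ := {e' | ∃ g', g'.IsHomogeneous e' ∧ g' ∈ I ∧
      g' ∉ Ideal.span (Set.range ψ)} with hE
    have hEne : E.Nonempty := ⟨e1, g1, hg1hom, hg1I, hg1span⟩
    obtain ⟨g0, hg0hom, hg0I, hg0span⟩ := Nat.sInf_mem hEne
    set ψ2 : Fin (t+1) → S := Fin.snoc ψ g0 with hψ2
    set d2 : Fin (t+1) → ℕ := Fin.snoc d (sInf E) with hd2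
    have hsub : Ideal.span (Set.range ψ) ≤ Ideal.span (Set.range ψ2) := by
      rw [hψ2, range_snoc_eq]
      exact Ideal.span_mono (Set.subset_insert _ _)
    have hg0mem : g0 ∈ Ideal.span (Set.range ψ2) := by
      rw [hψ2, range_snoc_eq]
      exact Ideal.subset_span (Set.mem_insert _ _)
    have hJlt : J < Ideal.span (Set.range ψ2) := by
      rw [← hspanJ]
      exact lt_of_le_of_ne hsub (fun hc => hg0span (hc ▸ hg0mem))
    have hdle : ∀ i, d i ≤ sInf E := by
      intro i
      refine hmin i g0 (sInf E) hg0hom hg0I (fun hc => hg0span ?_)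
      exact Ideal.span_mono (Set.image_subset_range ψ _) hc
    have hhom2 : ∀ i, (ψ2 i).IsHomogeneous (d2 i) := by
      intro i
      induction i using Fin.lastCases with
      | last => rw [hψ2, hd2, Fin.snoc_last, Fin.snoc_last]; exact hg0hom
      | cast i => rw [hψ2, hd2, Fin.snoc_castSucc, Fin.snoc_castSucc]; exact hhom i
    have hmemI2 : ∀ i, ψ2 i ∈ I := by
      intro i
      induction i using Fin.lastCases with
      | last => rw [hψ2, Fin.snoc_last]; exact hg0I
      | cast i => rw [hψ2, Fin.snoc_castSucc]; exact hmemI i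
    have hmin2 : ∀ i : Fin (t+1), ∀ g e, g.IsHomogeneous e → g ∈ I →
        g ∉ Ideal.span (ψ2 '' Set.Iio i) → d2 i ≤ e := by
      intro i g e hg hgI hgspan
      induction i using Fin.lastCases with
      | last =>
        rw [hψ2, image_Iio_last] at hgspan
        rw [hd2, Fin.snoc_last]
        exact Nat.sInf_le ⟨g, hg, hgI, hgspan⟩
      | cast i =>
        rw [hψ2, image_Iio_castSucc] at hgspan
        rw [hd2, Fin.snoc_castSucc]
        exact hmin i g e hg hgI hgspan
    have hwn2 : ∀ i : Fin (t+1), ψ2 i ∉ Ideal.span (ψ2 '' Set.Iio i) := by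
      intro i
      induction i using Fin.lastCases with
      | last => rw [hψ2, Fin.snoc_last, image_Iio_last]; exact hg0span
      | cast i => rw [hψ2, Fin.snoc_castSucc, image_Iio_castSucc]; exact hwn i
    have hmono2 : Monotone d2 := monotone_snoc d (sInf E) hmono hdle
    obtain ⟨m, hm, ψ', d', hpre, hhom', hmono', hwn', hspan'⟩ :=
      IH (Ideal.span (Set.range ψ2)) hJlt (t+1) ψ2 d2 rfl hhom2 hmemI2 hmin2 hwn2 hmono2
    refine ⟨m, le_trans (Nat.le_succ t) hm, ψ', d', ?_, hhom', hmono', hwn', hspan'⟩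
    intro i
    have h1 : Fin.castLE (le_trans (Nat.le_succ t) hm) i =
        Fin.castLE hm (Fin.castSucc i) := Fin.ext rfl
    rw [h1, hpre (Fin.castSucc i), hψ2, Fin.snoc_castSucc]

lemma range_castLE_eq {j : ℕ} {α : Type*} (ψ : Fin j → α) (i : Fin j) :
    Set.range (fun s : Fin (i : ℕ) => ψ (Fin.castLE (le_of_lt i.2) s)) = ψ '' Set.Iio i := by
  ext y
  constructor
  · rintro ⟨s, rfl⟩
    exact ⟨Fin.castLE (le_of_lt i.2) s,
      by rw [Set.mem_Iio, Fin.lt_def, Fin.coe_castLE]; exact s.2, rfl⟩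
  · rintro ⟨s, hs, rfl⟩
    exact ⟨⟨s.1, Fin.lt_def.1 hs⟩, congrArg ψ (Fin.ext rfl)⟩

theorem stmt1' (I : Ideal S)
    (hI : ∀ f ∈ I, ∀ dd : ℕ, homogeneousComponent dd f ∈ I)
    {j : ℕ} (ψ : Fin j → S) (d : Fin j → ℕ)
    (hhom : ∀ i, (ψ i).IsHomogeneous (d i))
    (hmem : ∀ i, ψ i ∈ I)
    (hwn : ∀ i : Fin j, ψ i ∉ Ideal.span (ψ '' Set.Iio i)) :
    ((∀ i : Fin j, nuSeq I (i + 1) = (d i : ℕ∞)) ↔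
      (∀ i : Fin j, ∀ g : S, ∀ e : ℕ,
        g.IsHomogeneous e → g ∈ I → g ∉ Ideal.span (ψ '' Set.Iio i) → d i ≤ e)) ∧
    ((∀ i : Fin j, nuSeq I (i + 1) = (d i : ℕ∞)) →
      ∃ (m : ℕ) (hjm : j ≤ m) (ψ' : Fin m → S) (d' : Fin m → ℕ),
        (∀ i : Fin j, ψ' (Fin.castLE hjm i) = ψ i) ∧
        (∀ i, (ψ' i).IsHomogeneous (d' i)) ∧
        Monotone d' ∧
        (∀ i : Fin m, ψ' i ∉ Ideal.span (ψ' '' Set.Iio i)) ∧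
        Ideal.span (Set.range ψ') = I) := by
  classical
  have hiff : (∀ i : Fin j, nuSeq I (i + 1) = (d i : ℕ∞)) ↔
      (∀ i : Fin j, ∀ g : S, ∀ e : ℕ,
        g.IsHomogeneous e → g ∈ I → g ∉ Ideal.span (ψ '' Set.Iio i) → d i ≤ e) := by
    constructor
    · intro hν
      suffices H : ∀ N : ℕ, ∀ i : Fin j, (i : ℕ) < N → ∀ g : S, ∀ e : ℕ,
          g.IsHomogeneous e → g ∈ I → g ∉ Ideal.span (ψ '' Set.Iio i) → d i ≤ e by
        intro i
        exact H ((i : ℕ) + 1) i (Nat.lt_succ_self _)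
      intro N
      induction N with
      | zero => exact fun i hi => absurd hi (Nat.not_lt_zero _)
      | succ N IH =>
        intro i hi g e hg hgI hgspan
        set E : Set ℕ := {e' | ∃ g' : S, g'.IsHomogeneous e' ∧ g' ∈ I ∧
          g' ∉ Ideal.span (ψ '' Set.Iio i)} with hEdef
        have heE : e ∈ E := ⟨g, hg, hgI, hgspan⟩
        obtain ⟨g0, hg0, hg0I, hg0span⟩ := Nat.sInf_mem ⟨e, heE⟩
        refine le_trans ?_ (Nat.sInf_le heE)
        have hij : (i : ℕ) ≤ j := le_of_lt i.2
        set χ : Fin ((i : ℕ) + 1) → S :=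
          Fin.snoc (fun s : Fin (i : ℕ) => ψ (Fin.castLE hij s)) g0 with hχ
        set D : Fin ((i : ℕ) + 1) → ℕ :=
          Fin.snoc (fun s : Fin (i : ℕ) => d (Fin.castLE hij s)) (sInf E) with hD
        have hpre : Set.range (fun s : Fin (i : ℕ) => ψ (Fin.castLE hij s)) =
            ψ '' Set.Iio i := range_castLE_eq ψ i
        have hle : nuSeq I ((i : ℕ) + 1) ≤ (D (Fin.last (i : ℕ)) : ℕ∞) := by
          apply nu_le I χ D
          · intro s
            induction s using Fin.lastCases with
            | last => rw [hχ, hD, Fin.snoc_last, Fin.snoc_last]; exact hg0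
            | cast s => rw [hχ, hD, Fin.snoc_castSucc, Fin.snoc_castSucc]; exact hhom _
          · intro s
            induction s using Fin.lastCases with
            | last => rw [hχ, Fin.snoc_last]; exact hg0I
            | cast s => rw [hχ, Fin.snoc_castSucc]; exact hmem _
          · intro t g' e' hg' hg'I hg'span
            induction t using Fin.lastCases with
            | last =>
              rw [hχ, image_Iio_last, hpre] at hg'span
              rw [hD, Fin.snoc_last]
              exact Nat.sInf_le ⟨g', hg', hg'I, hg'span⟩
            | cast t =>
              rw [hχ, image_Iio_castSucc, image_Iio_castLE] at hg'span
              rw [hD, Fin.snoc_castSucc]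
              refine IH (Fin.castLE hij t) ?_ g' e' hg' hg'I hg'span
              have h1 := t.2
              rw [Fin.coe_castLE]
              omega
          · intro t
            induction t using Fin.lastCases with
            | last => rw [hχ, Fin.snoc_last, image_Iio_last, hpre]; exact hg0span
            | cast t =>
              rw [hχ, Fin.snoc_castSucc, image_Iio_castSucc, image_Iio_castLE]
              exact hwn _
        rw [hν i, hD, Fin.snoc_last] at hle
        exact_mod_cast hle
    · intro hii' i
      have hij1 : (i : ℕ) + 1 ≤ j := i.2
      have hcast : Fin.castLE hij1 (Fin.last (i : ℕ)) = i := Fin.ext rfl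
      apply le_antisymm
      · have h2 := nu_le I (fun s => ψ (Fin.castLE hij1 s)) (fun s => d (Fin.castLE hij1 s))
          (fun s => hhom _) (fun s => hmem _)
          (fun t g e hg hgI hgspan => by
            rw [image_Iio_castLE] at hgspan
            exact hii' (Fin.castLE hij1 t) g e hg hgI hgspan)
          (fun t => by rw [image_Iio_castLE]; exact hwn _)
        rwa [hcast] at h2
      · have h2 := nu_ge I (fun s => ψ (Fin.castLE hij1 s)) (fun s => d (Fin.castLE hij1 s))
          (fun s => hhom _) (fun s => hmem _)
          (fun g e hg hgI hgspan => by
            rw [image_Iio_castLE] at hgspan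
            exact hii' (Fin.castLE hij1 (Fin.last (i : ℕ))) g e hg hgI hgspan)
        rwa [hcast] at h2
  refine ⟨hiff, fun hν => ?_⟩
  have hii' := hiff.1 hν
  have hmono : Monotone d := by
    intro a b hab
    refine hii' a (ψ b) (d b) (hhom b) (hmem b) (fun hc => hwn b ?_)
    exact Ideal.span_mono (Set.image_mono (f := ψ) (Set.Iio_subset_Iio hab)) hc
  exact extendLemma I hI (Ideal.span (Set.range ψ)) j ψ d rfl hhom hmem hii' hwn hmono

end Helpers

theorem stmt1 {k : Type*} [Field k] {n : ℕ} (I : Ideal (MvPolynomial (Fin n) k))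
    (hI : ∀ f ∈ I, ∀ d : ℕ, homogeneousComponent d f ∈ I)
    {j : ℕ} (ψ : Fin j → MvPolynomial (Fin n) k) (d : Fin j → ℕ)
    (hhom : ∀ i, (ψ i).IsHomogeneous (d i))
    (hmem : ∀ i, ψ i ∈ I)
    (hwn : ∀ i : Fin j, ψ i ∉ Ideal.span (ψ '' Set.Iio i)) :
    -- (1) the two conditions (ii) and (ii') are equivalent:
    ((∀ i : Fin j, nuSeq I (i + 1) = (d i : ℕ∞)) ↔
      (∀ i : Fin j, ∀ g : MvPolynomial (Fin n) k, ∀ e : ℕ,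
        g.IsHomogeneous e → g ∈ I → g ∉ Ideal.span (ψ '' Set.Iio i) → d i ≤ e)) ∧
    -- (2) if these conditions hold, ψ extends to a standard base of I:
    ((∀ i : Fin j, nuSeq I (i + 1) = (d i : ℕ∞)) →
      ∃ (m : ℕ) (hjm : j ≤ m) (ψ' : Fin m → MvPolynomial (Fin n) k) (d' : Fin m → ℕ),
        (∀ i : Fin j, ψ' (Fin.castLE hjm i) = ψ i) ∧
        (∀ i, (ψ' i).IsHomogeneous (d' i)) ∧
        Monotone d' ∧
        (∀ i : Fin m, ψ' i ∉ Ideal.span (ψ' '' Set.Iio i)) ∧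
        Ideal.span (Set.range ψ') = I) := by
  exact stmt1' I hI ψ d hhom hmem hwn
end

section
/- Let I ⊆ S be a homogeneous ideal, let K/k be a field extension, let S_K = K[X_1,…,X_n], and let I_K = I·S_K be the extended ideal. Then ν^i(I_K) = ν^i(I) for every i ≥ 1; that is, ν*(I) = ν*(I_K). -/
open MvPolynomial

/-! ### Auxiliary lemmas -/

section Exchange

/-- Exchange lemma: if the span of `s` is covered by `U` together with the span of `m`
vectors, then it is covered by `U` together with the span of at most `m` elements of `s`. -/
lemma nu_exchange {K V : Type*} [Field K] [AddCommGroup V] [Module K V]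
    (U : Submodule K V) (s : Set V) {m : ℕ} (φ : Fin m → V)
    (h : Submodule.span K s ≤ U ⊔ Submodule.span K (Set.range φ)) :
    ∃ t : Finset V, ↑t ⊆ s ∧ t.card ≤ m ∧
      Submodule.span K s ≤ U ⊔ Submodule.span K (t : Set V) := by
  classical
  set π := U.mkQ with hπ
  set s' : Set (V ⧸ U) := π '' s with hs'
  set N : Submodule K (V ⧸ U) := Submodule.span K (Set.range (π ∘ φ)) with hN
  haveI hNfin : FiniteDimensional K N :=
    FiniteDimensional.span_of_finite K (Set.finite_range (π ∘ φ))
  have hs'N : Submodule.span K s' ≤ N := by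
    rw [hs', Submodule.span_image]
    refine le_trans (Submodule.map_mono h) ?_
    rw [Submodule.map_sup]
    have hU : Submodule.map π U = ⊥ := by
      rw [eq_bot_iff]
      rintro y ⟨z, hz, rfl⟩
      simp [π, (Submodule.Quotient.mk_eq_zero U).mpr hz]
    rw [hU, bot_sup_eq, ← Submodule.span_image, ← Set.range_comp]
  set s'' : Set N := (N.subtype) ⁻¹' s' with hs''
  have hs'sub : s' ⊆ N := fun y hy => hs'N (Submodule.subset_span hy)
  have himg : N.subtype '' s'' = s' := by
    apply Set.Subset.antisymm
    · rintro y ⟨z, hz, rfl⟩; exact hz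
    · intro y hy; exact ⟨⟨y, hs'sub hy⟩, hy, rfl⟩
  obtain ⟨b, hbs, hbspan, hbli⟩ := exists_linearIndependent K s''
  have hbfin : b.Finite := hbli.setFinite
  have hbcard : hbfin.toFinset.card ≤ m := by
    refine le_trans (LinearIndependent.finset_card_le_finrank (R := K) ?_) ?_
    · refine hbli.comp (fun x : hbfin.toFinset => (⟨x.1, by
        have := x.2; rwa [Set.Finite.mem_toFinset] at this⟩ : b)) ?_
      intro x y hxy
      apply Subtype.ext
      simpa using congrArg Subtype.val hxy
    · have h1 := finrank_range_le_card (R := K) (π ∘ φ)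
      simpa [Set.finrank, hN] using h1
  have hchoice : ∀ y ∈ Set.Finite.toFinset (hbfin.image N.subtype),
      ∃ x ∈ s, π x = y := by
    intro y hy
    rw [Set.Finite.mem_toFinset] at hy
    obtain ⟨z, hz, rfl⟩ := hy
    have : (z : V ⧸ U) ∈ s' := hbs hz
    obtain ⟨x, hx, hxe⟩ := this
    exact ⟨x, hx, hxe⟩
  choose g hg1 hg2 using hchoice
  set tfin : Finset V := (hbfin.image N.subtype).toFinset.attach.image
    (fun y => g y.1 y.2) with htfin
  refine ⟨tfin, ?_, ?_, ?_⟩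
  · intro x hx
    simp only [htfin, Finset.coe_image, Set.mem_image] at hx
    obtain ⟨y, _, rfl⟩ := hx
    exact hg1 _ _
  · calc tfin.card ≤ (hbfin.image N.subtype).toFinset.attach.card := Finset.card_image_le
      _ = (hbfin.image N.subtype).toFinset.card := Finset.card_attach
      _ ≤ hbfin.toFinset.card := by
          rw [Set.Finite.toFinset_image]
          exact Finset.card_image_le
      _ ≤ m := hbcard
  · have hπt : π '' tfin ⊇ N.subtype '' b := by
      rintro y ⟨z, hz, rfl⟩
      have hymem : (z : V ⧸ U) ∈ (hbfin.image N.subtype).toFinset := by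
        rw [Set.Finite.mem_toFinset]; exact ⟨z, hz, rfl⟩
      refine ⟨g _ hymem, ?_, hg2 _ hymem⟩
      rw [htfin]
      exact Finset.mem_coe.mpr (Finset.mem_image.mpr ⟨⟨_, hymem⟩, Finset.mem_attach _ _, rfl⟩)
    have hspan' : Submodule.span K s' ≤ Submodule.map π (Submodule.span K (tfin : Set V)) := by
      rw [← Submodule.span_image (R := K)]
      have h1 : Submodule.span K s' = Submodule.span K (N.subtype '' b) := by
        rw [← himg, Submodule.span_image, Submodule.span_image, hbspan]
      rw [h1]
      exact Submodule.span_mono hπt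
    rw [Submodule.span_le]
    intro x hx
    have : π x ∈ Submodule.map π (Submodule.span K (tfin : Set V)) :=
      hspan' (Submodule.subset_span ⟨x, hx, rfl⟩)
    obtain ⟨w, hw, hwe⟩ := this
    have hxw : x - w ∈ U := by
      rw [← Submodule.ker_mkQ U, LinearMap.mem_ker, map_sub, hwe, sub_self]
    rw [← sub_add_cancel x w]
    exact Submodule.add_mem _ (Submodule.mem_sup_left hxw)
      (Submodule.mem_sup_right hw)

end Exchange

section OneField

variable {F : Type*} [Field F] {n : ℕ}

lemma nu_hC_mul {e : ℕ} {φ : MvPolynomial (Fin n) F} (hφ : φ.IsHomogeneous e)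
    (a : MvPolynomial (Fin n) F) (d : ℕ) :
    homogeneousComponent d (a * φ)
      = if e ≤ d then homogeneousComponent (d - e) a * φ else 0 := by
  classical
  conv_lhs => rw [← sum_homogeneousComponent a, Finset.sum_mul, map_sum]
  have key : ∀ i : ℕ, homogeneousComponent d (homogeneousComponent i a * φ)
      = if d = i + e then homogeneousComponent i a * φ else 0 := fun i =>
    homogeneousComponent_of_mem ((homogeneousComponent_isHomogeneous i a).mul hφ)
  simp_rw [key]
  by_cases he : e ≤ d
  · rw [if_pos he, Finset.sum_eq_single (d - e)]
    · rw [if_pos (by omega)]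
    · intro b _ hb
      rw [if_neg (by omega)]
    · intro hmem
      rw [if_pos (by omega), homogeneousComponent_eq_zero _ _ (by
        simp only [Finset.mem_range, not_lt] at hmem; omega), zero_mul]
  · rw [if_neg he, Finset.sum_eq_zero]
    intro b _
    rw [if_neg (by omega)]

variable {m : ℕ}

lemma nu_exists_repr {φ : Fin m → MvPolynomial (Fin n) F} {dg : Fin m → ℕ}
    (hφ : ∀ j, (φ j).IsHomogeneous (dg j)) {x : MvPolynomial (Fin n) F}
    (hx : x ∈ Ideal.span (Set.range φ)) (d : ℕ) :
    ∃ c : Fin m → MvPolynomial (Fin n) F,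
      (∀ j, (c j).IsHomogeneous (d - dg j)) ∧ (∀ j, ¬ dg j ≤ d → c j = 0) ∧
      homogeneousComponent d x = ∑ j, c j * φ j := by
  classical
  obtain ⟨a, ha⟩ := (Ideal.mem_span_range_iff_exists_fun).mp hx
  refine ⟨fun j => if dg j ≤ d then homogeneousComponent (d - dg j) (a j) else 0, ?_, ?_, ?_⟩
  · intro j
    dsimp only
    split_ifs
    · exact homogeneousComponent_isHomogeneous _ _
    · exact isHomogeneous_zero _ _ _
  · intro j hj; dsimp only; rw [if_neg hj]
  · rw [← ha, map_sum]
    refine Finset.sum_congr rfl fun j _ => ?_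
    dsimp only
    rw [nu_hC_mul (hφ j)]
    split_ifs with h
    · rfl
    · rw [zero_mul]

lemma nu_span_homog_closed {φ : Fin m → MvPolynomial (Fin n) F} {dg : Fin m → ℕ}
    (hφ : ∀ j, (φ j).IsHomogeneous (dg j)) :
    ∀ x ∈ Ideal.span (Set.range φ), ∀ d : ℕ,
      homogeneousComponent d x ∈ Ideal.span (Set.range φ) := by
  intro x hx d
  obtain ⟨c, _, _, h3⟩ := nu_exists_repr hφ hx d
  rw [h3]
  exact Ideal.sum_mem _ fun j _ => Ideal.mul_mem_left _ _ (Ideal.subset_span ⟨j, rfl⟩)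

/-- The ideal generated by the homogeneous elements of `J` of degree `< d`. -/
noncomputable def nuLowIdeal (J : Ideal (MvPolynomial (Fin n) F)) (d : ℕ) : Ideal (MvPolynomial (Fin n) F) :=
  Ideal.span {x | x ∈ J ∧ ∃ e < d, x.IsHomogeneous e}

lemma nu_isHomogeneous_zero_eq {c : MvPolynomial (Fin n) F} (hc : c.IsHomogeneous 0) :
    c = C (coeff 0 c) := by
  rw [← homogeneousComponent_zero]
  rw [homogeneousComponent_of_mem ((mem_homogeneousSubmodule _ _).mpr hc), if_pos rfl]

lemma nu_works_imp_quot {J : Ideal (MvPolynomial (Fin n) F)}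
    {φ : Fin m → MvPolynomial (Fin n) F} {dg : Fin m → ℕ}
    (hφ : ∀ j, (φ j).IsHomogeneous (dg j)) {d : ℕ}
    (hw : (homogeneousSubmodule (Fin n) F d : Set (MvPolynomial (Fin n) F)) ∩ J =
      (homogeneousSubmodule (Fin n) F d : Set (MvPolynomial (Fin n) F)) ∩
        Ideal.span (Set.range φ))
    {x : MvPolynomial (Fin n) F} (hx : x ∈ homogeneousSubmodule (Fin n) F d) (hxJ : x ∈ J)
    (hφJ : ∀ j, φ j ∈ J) :
    x ∈ Submodule.restrictScalars F (nuLowIdeal J d) ⊔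
      Submodule.span F (φ '' {j | dg j = d}) := by
  classical
  have hxs : x ∈ Ideal.span (Set.range φ) := by
    have hmem : x ∈ (homogeneousSubmodule (Fin n) F d : Set (MvPolynomial (Fin n) F)) ∩
        Ideal.span (Set.range φ) := by
      rw [← hw]; exact ⟨hx, hxJ⟩
    exact hmem.2
  obtain ⟨c, hc1, hc2, hc3⟩ := nu_exists_repr hφ hxs d
  have hxe : x = ∑ j, c j * φ j := by
    rw [← hc3, homogeneousComponent_of_mem hx, if_pos rfl]
  rw [hxe]
  refine Submodule.sum_mem _ fun j _ => ?_
  rcases lt_trichotomy (dg j) d with h | h | h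
  · refine Submodule.mem_sup_left ?_
    show c j * φ j ∈ nuLowIdeal J d
    exact Ideal.mul_mem_left _ _ (Ideal.subset_span ⟨hφJ j, dg j, h, hφ j⟩)
  · refine Submodule.mem_sup_right ?_
    have h0 : (c j).IsHomogeneous 0 := by
      have := hc1 j; rwa [h, Nat.sub_self] at this
    rw [nu_isHomogeneous_zero_eq h0, ← smul_eq_C_mul]
    exact Submodule.smul_mem _ _ (Submodule.subset_span ⟨j, h, rfl⟩)
  · rw [hc2 j (by omega), zero_mul]
    exact Submodule.zero_mem _

lemma nu_quot_imp_works {J : Ideal (MvPolynomial (Fin n) F)}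
    {φ : Fin m → MvPolynomial (Fin n) F} {dg : Fin m → ℕ}
    (hφ : ∀ j, (φ j).IsHomogeneous (dg j)) (hφJ : ∀ j, φ j ∈ J) {ν : ℕ}
    (hq : ∀ d < ν, ∀ x ∈ homogeneousSubmodule (Fin n) F d, x ∈ J →
      x ∈ Submodule.restrictScalars F (nuLowIdeal J d) ⊔
        Submodule.span F (φ '' {j | dg j = d})) :
    ∀ μ < ν, (homogeneousSubmodule (Fin n) F μ : Set (MvPolynomial (Fin n) F)) ∩ J =
      (homogeneousSubmodule (Fin n) F μ : Set (MvPolynomial (Fin n) F)) ∩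
        Ideal.span (Set.range φ) := by
  intro μ
  induction μ using Nat.strong_induction_on with
  | _ μ IH =>
    intro hμ
    apply Set.Subset.antisymm
    · rintro x ⟨hx1, hx2⟩
      refine ⟨hx1, ?_⟩
      have hmem := hq μ hμ x hx1 hx2
      obtain ⟨y, hy, z, hz, rfl⟩ := Submodule.mem_sup.mp hmem
      have hylow : y ∈ Ideal.span (Set.range φ) := by
        have hle : nuLowIdeal J μ ≤ Ideal.span (Set.range φ) := by
          rw [nuLowIdeal, Ideal.span_le]
          rintro g ⟨hgJ, e, he, hge⟩
          have hmem2 : g ∈ (homogeneousSubmodule (Fin n) F e :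
              Set (MvPolynomial (Fin n) F)) ∩ Ideal.span (Set.range φ) := by
            rw [← IH e (by omega) (by omega)]
            exact ⟨hge, hgJ⟩
          exact hmem2.2
        exact hle hy
      have hzspan : z ∈ Ideal.span (Set.range φ) := by
        have hle : Submodule.span F (φ '' {j | dg j = μ}) ≤
            Submodule.restrictScalars F (Ideal.span (Set.range φ)) := by
          rw [Submodule.span_le]
          rintro g ⟨j, _, rfl⟩
          exact Ideal.subset_span ⟨j, rfl⟩
        exact hle hz
      exact SetLike.mem_coe.mpr (Ideal.add_mem _ hylow hzspan)
    · rintro x ⟨hx1, hx2⟩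
      refine ⟨hx1, ?_⟩
      have hle : Ideal.span (Set.range φ) ≤ J := by
        rw [Ideal.span_le]; rintro g ⟨j, rfl⟩; exact hφJ j
      exact hle hx2

end OneField

section BaseChange

variable {k K : Type*} [Field k] [Field K] [Algebra k K] {n : ℕ}

noncomputable def nuLmap (ℓ : K →ₗ[k] k) : MvPolynomial (Fin n) K →+ MvPolynomial (Fin n) k where
  toFun p := AddMonoidAlgebra.ofCoeff (Finsupp.mapRange ℓ (map_zero ℓ) (AddMonoidAlgebra.coeff p))
  map_zero' := congrArg AddMonoidAlgebra.ofCoeff Finsupp.mapRange_zero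
  map_add' p q := congrArg AddMonoidAlgebra.ofCoeff
    (Finsupp.mapRange_add (hf := map_zero ℓ) (map_add ℓ) (AddMonoidAlgebra.coeff p) (AddMonoidAlgebra.coeff q))

lemma nu_coeff_Lmap (ℓ : K →ₗ[k] k) (p : MvPolynomial (Fin n) K) (m : Fin n →₀ ℕ) :
    coeff m (nuLmap ℓ p) = ℓ (coeff m p) :=
  by exact Finsupp.mapRange_apply (hf := map_zero ℓ)

lemma nu_Lmap_map (ℓ : K →ₗ[k] k) (hℓ : ∀ c, ℓ (algebraMap k K c) = c)
    (x : MvPolynomial (Fin n) k) :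
    nuLmap ℓ (MvPolynomial.map (algebraMap k K) x) = x := by
  ext m; rw [nu_coeff_Lmap, coeff_map, hℓ]

lemma nu_Lmap_smul_map (ℓ : K →ₗ[k] k) (r : K) (w : MvPolynomial (Fin n) k) :
    nuLmap ℓ (r • MvPolynomial.map (algebraMap k K) w) = ℓ r • w := by
  ext m
  rw [nu_coeff_Lmap, coeff_smul, coeff_map, coeff_smul, smul_eq_mul, smul_eq_mul, mul_comm,
    ← Algebra.smul_def, map_smul, smul_eq_mul, mul_comm]

lemma nu_exists_ell : ∃ ℓ : K →ₗ[k] k, ∀ c, ℓ (algebraMap k K c) = c := by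
  obtain ⟨ℓ, hℓ⟩ := (Algebra.linearMap k K).exists_leftInverse_of_injective
    (LinearMap.ker_eq_bot.mpr (by exact (algebraMap k K).injective))
  exact ⟨ℓ, fun c => LinearMap.congr_fun hℓ c⟩

lemma nu_descent (W : Submodule k (MvPolynomial (Fin n) k)) {x : MvPolynomial (Fin n) k}
    (hx : MvPolynomial.map (algebraMap k K) x ∈
      Submodule.span K (MvPolynomial.map (algebraMap k K) '' (W : Set _))) : x ∈ W := by
  obtain ⟨ℓ, hℓ⟩ := nu_exists_ell (k := k) (K := K)
  rw [Submodule.mem_span_set] at hx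
  obtain ⟨c, hsupp, hsum⟩ := hx
  have hx2 : x = nuLmap ℓ (MvPolynomial.map (algebraMap k K) x) := (nu_Lmap_map ℓ hℓ x).symm
  rw [hx2, ← hsum, map_finsuppSum]
  refine Submodule.sum_mem W ?_
  intro q hq
  obtain ⟨w, hw, rfl⟩ := hsupp hq
  show nuLmap ℓ (c (MvPolynomial.map (algebraMap k K) w) •
    MvPolynomial.map (algebraMap k K) w) ∈ W
  rw [nu_Lmap_smul_map]
  exact W.smul_mem _ hw

lemma nu_hC_map (g : k →+* K) (d : ℕ) (p : MvPolynomial (Fin n) k) :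
    homogeneousComponent d (MvPolynomial.map g p) =
      MvPolynomial.map g (homogeneousComponent d p) := by
  ext m
  rw [coeff_homogeneousComponent, coeff_map, coeff_map, coeff_homogeneousComponent, apply_ite g,
    map_zero]

lemma nu_spanK_ideal (J : Ideal (MvPolynomial (Fin n) k)) :
    (Ideal.map (MvPolynomial.map (algebraMap k K)) J : Set (MvPolynomial (Fin n) K)) =
      (Submodule.span K (MvPolynomial.map (algebraMap k K) '' (J : Set _)) :
        Submodule K (MvPolynomial (Fin n) K)) := by
  set f := MvPolynomial.map (algebraMap k K) with hf
  apply Set.Subset.antisymm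
  · have hmulX : ∀ (i : Fin n) (x : MvPolynomial (Fin n) K),
        x ∈ Submodule.span K (f '' (J : Set _)) →
        X i * x ∈ Submodule.span K (f '' (J : Set _)) := by
      intro i x hx
      refine Submodule.span_induction ?_ ?_ ?_ ?_ hx
      · rintro y ⟨a, ha, rfl⟩
        have hXa : X i * f a = f (X i * a) := by rw [map_mul, map_X]
        rw [hXa]
        exact Submodule.subset_span ⟨X i * a, J.mul_mem_left _ ha, rfl⟩
      · rw [mul_zero]; exact Submodule.zero_mem _
      · intro y z _ _ hy hz; rw [mul_add]; exact Submodule.add_mem _ hy hz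
      · intro r y _ hy; rw [mul_smul_comm]; exact Submodule.smul_mem _ _ hy
    have hmul : ∀ (p x : MvPolynomial (Fin n) K),
        x ∈ Submodule.span K (f '' (J : Set _)) →
        p * x ∈ Submodule.span K (f '' (J : Set _)) := by
      intro p
      induction p using MvPolynomial.induction_on with
      | C a => intro x hx; rw [← smul_eq_C_mul]; exact Submodule.smul_mem _ _ hx
      | add p q hp hq => intro x hx; rw [add_mul]; exact Submodule.add_mem _ (hp x hx) (hq x hx)
      | mul_X p i hp => intro x hx; rw [mul_assoc]; exact hp _ (hmulX i x hx)
    intro x hx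
    rw [Ideal.map, Ideal.span, SetLike.mem_coe] at hx
    refine Submodule.span_induction ?_ ?_ ?_ ?_ hx
    · exact fun y hy => Submodule.subset_span hy
    · exact Submodule.zero_mem _
    · intro y z _ _ hy hz; exact Submodule.add_mem _ hy hz
    · intro r y _ hy; rw [smul_eq_mul]; exact hmul r y hy
  · intro x hx
    have hle : Submodule.span K (f '' (J : Set _)) ≤
        Submodule.restrictScalars K (Ideal.map f J) := by
      rw [Submodule.span_le]
      rintro y ⟨a, ha, rfl⟩
      exact Ideal.mem_map_of_mem f ha
    exact hle hx

lemma nu_spanK_graded (J : Ideal (MvPolynomial (Fin n) k))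
    (hJ : ∀ x ∈ J, ∀ d : ℕ, homogeneousComponent d x ∈ J) (μ : ℕ) :
    (homogeneousSubmodule (Fin n) K μ : Set (MvPolynomial (Fin n) K)) ∩
      (Ideal.map (MvPolynomial.map (algebraMap k K)) J : Set _) =
    ((Submodule.span K (MvPolynomial.map (algebraMap k K) ''
      ((homogeneousSubmodule (Fin n) k μ : Set _) ∩ (J : Set _)))
        : Submodule K (MvPolynomial (Fin n) K)) : Set (MvPolynomial (Fin n) K)) := by
  set f := MvPolynomial.map (algebraMap k K) with hf
  apply Set.Subset.antisymm
  · rintro p ⟨hp1, hp2⟩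
    rw [nu_spanK_ideal, SetLike.mem_coe, Submodule.mem_span_set] at hp2
    obtain ⟨c, hsupp, hsum⟩ := hp2
    have hph : p = homogeneousComponent μ p := by
      rw [homogeneousComponent_of_mem hp1, if_pos rfl]
    rw [SetLike.mem_coe, hph, ← hsum, map_finsuppSum]
    refine Submodule.sum_mem _ ?_
    intro q hq
    obtain ⟨a, ha, rfl⟩ := hsupp hq
    show homogeneousComponent μ (c (f a) • f a) ∈ _
    rw [map_smul, nu_hC_map]
    refine Submodule.smul_mem _ _ (Submodule.subset_span ?_)
    exact ⟨homogeneousComponent μ a, ⟨homogeneousComponent_mem μ a, hJ a ha μ⟩, rfl⟩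
  · intro x hx
    have hle : Submodule.span K (f '' ((homogeneousSubmodule (Fin n) k μ : Set _) ∩ J)) ≤
        (homogeneousSubmodule (Fin n) K μ) ⊓ Submodule.restrictScalars K (Ideal.map f J) := by
      rw [Submodule.span_le]
      rintro y ⟨a, ⟨ha1, ha2⟩, rfl⟩
      refine ⟨?_, Ideal.mem_map_of_mem f ha2⟩
      have ha1' : MvPolynomial.IsHomogeneous a μ := ha1
      exact (mem_homogeneousSubmodule _ _).mpr (ha1'.map _)
    exact ⟨(hle hx).1, (hle hx).2⟩

end BaseChange

section MainLemmas

variable {k K : Type*} [Field k] [Field K] [Algebra k K] {n : ℕ}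

lemma nu_forward (J : Ideal (MvPolynomial (Fin n) k))
    (hJ : ∀ x ∈ J, ∀ d : ℕ, homogeneousComponent d x ∈ J) {m : ℕ} {ν : ℕ}
    (φ : Fin m → MvPolynomial (Fin n) k) (dg : Fin m → ℕ)
    (hφh : ∀ j, (φ j).IsHomogeneous (dg j)) (hφJ : ∀ j, φ j ∈ J)
    (hw : ∀ μ < ν, (homogeneousSubmodule (Fin n) k μ : Set (MvPolynomial (Fin n) k)) ∩ J =
      (homogeneousSubmodule (Fin n) k μ : Set (MvPolynomial (Fin n) k)) ∩
        Ideal.span (Set.range φ)) :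
    ∀ μ < ν, (homogeneousSubmodule (Fin n) K μ : Set (MvPolynomial (Fin n) K)) ∩
        (Ideal.map (MvPolynomial.map (algebraMap k K)) J : Set _) =
      (homogeneousSubmodule (Fin n) K μ : Set (MvPolynomial (Fin n) K)) ∩
        Ideal.span (Set.range (MvPolynomial.map (algebraMap k K) ∘ φ)) := by
  intro μ hμ
  set f := MvPolynomial.map (algebraMap k K) with hf
  have hmap : Ideal.span (Set.range (f ∘ φ)) = Ideal.map f (Ideal.span (Set.range φ)) := by
    rw [Ideal.map_span, Set.range_comp]
  rw [nu_spanK_graded J hJ μ, hmap, nu_spanK_graded _ (nu_span_homog_closed hφh) μ, hw μ hμ]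

lemma nu_backward (I : Ideal (MvPolynomial (Fin n) k))
    (hI : ∀ x ∈ I, ∀ d : ℕ, homogeneousComponent d x ∈ I) {m : ℕ} {ν : ℕ}
    (φ : Fin m → MvPolynomial (Fin n) K) (dg : Fin m → ℕ)
    (hφh : ∀ j, (φ j).IsHomogeneous (dg j))
    (hφI : ∀ j, φ j ∈ Ideal.map (MvPolynomial.map (algebraMap k K)) I)
    (hw : ∀ μ < ν, (homogeneousSubmodule (Fin n) K μ : Set (MvPolynomial (Fin n) K)) ∩
        (Ideal.map (MvPolynomial.map (algebraMap k K)) I : Set _) =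
      (homogeneousSubmodule (Fin n) K μ : Set (MvPolynomial (Fin n) K)) ∩
        Ideal.span (Set.range φ)) :
    ∃ ψ : Fin m → MvPolynomial (Fin n) k, (∀ j, ψ j ∈ I) ∧
      (∀ j, (ψ j).IsHomogeneous (dg j)) ∧
      ∀ μ < ν, (homogeneousSubmodule (Fin n) k μ : Set (MvPolynomial (Fin n) k)) ∩ I =
        (homogeneousSubmodule (Fin n) k μ : Set (MvPolynomial (Fin n) k)) ∩
          Ideal.span (Set.range ψ) := by
  classical
  set f := MvPolynomial.map (algebraMap k K) with hf
  set IK := Ideal.map f I with hIK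
  -- Step 1: per-degree exchange
  have step1 : ∀ d : ℕ, ∃ t : Finset (MvPolynomial (Fin n) K), d < ν →
      (↑t ⊆ f '' ((homogeneousSubmodule (Fin n) k d : Set _) ∩ (I : Set _)) ∧
      t.card ≤ (Finset.univ.filter fun j => dg j = d).card ∧
      Submodule.span K (f '' ((homogeneousSubmodule (Fin n) k d : Set _) ∩ (I : Set _))) ≤
        Submodule.restrictScalars K (nuLowIdeal IK d) ⊔ Submodule.span K (t : Set _)) := by
    intro d
    by_cases hd : d < ν
    · set Fd := Finset.univ.filter fun j => dg j = d with hFd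
      set φd : Fin Fd.card → MvPolynomial (Fin n) K :=
        fun r => φ ((Fd.orderIsoOfFin rfl r) : Fin m) with hφd
      have hrange : Set.range φd = φ '' {j | dg j = d} := by
        ext y
        constructor
        · rintro ⟨r, rfl⟩
          refine ⟨((Fd.orderIsoOfFin rfl r) : Fin m), ?_, rfl⟩
          have h2 := (Fd.orderIsoOfFin rfl r).2
          exact (Finset.mem_filter.mp h2).2
        · rintro ⟨j, hj, rfl⟩
          have hjF : j ∈ Fd := Finset.mem_filter.mpr ⟨Finset.mem_univ j, hj⟩
          refine ⟨(Fd.orderIsoOfFin rfl).symm ⟨j, hjF⟩, ?_⟩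
          show φ ((((Fd.orderIsoOfFin rfl) ((Fd.orderIsoOfFin rfl).symm ⟨j, hjF⟩)) : Fd) : Fin m)
            = φ j
          rw [OrderIso.apply_symm_apply]
      have hsle : Submodule.span K
          (f '' ((homogeneousSubmodule (Fin n) k d : Set _) ∩ (I : Set _))) ≤
          Submodule.restrictScalars K (nuLowIdeal IK d) ⊔ Submodule.span K (Set.range φd) := by
        rw [Submodule.span_le]
        intro x hx
        have hx' : x ∈ (homogeneousSubmodule (Fin n) K d : Set (MvPolynomial (Fin n) K)) ∩
            (IK : Set _) := by
          rw [nu_spanK_graded I hI d]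
          exact Submodule.subset_span hx
        have := nu_works_imp_quot hφh (hw d hd) hx'.1 hx'.2 hφI
        rw [← hrange] at this
        exact this
      obtain ⟨t, ht1, ht2, ht3⟩ := nu_exchange _ _ φd hsle
      exact ⟨t, fun _ => ⟨ht1, ht2, ht3⟩⟩
    · exact ⟨∅, fun h => absurd h hd⟩
  choose t' ht' using step1
  -- Step 2: per-degree construction of k-rational elements
  have key : ∀ d : ℕ, ∃ u : Fin m → MvPolynomial (Fin n) k,
      (∀ j, u j ∈ I) ∧ (∀ j, (u j).IsHomogeneous d) ∧
      (d < ν → ∀ x ∈ t' d, ∃ j, dg j = d ∧ f (u j) = x) := by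
    intro d
    by_cases hd : d < ν
    · obtain ⟨hsub, hcard, _⟩ := ht' d hd
      have hpre : ∀ x : {x // x ∈ t' d}, ∃ y, y ∈ I ∧ y.IsHomogeneous d ∧ f y = (x : _) := by
        rintro ⟨x, hx⟩
        obtain ⟨y, ⟨hy1, hy2⟩, rfl⟩ := hsub hx
        exact ⟨y, hy2, (mem_homogeneousSubmodule _ _).mp hy1, rfl⟩
      choose pre hpre1 hpre2 hpre3 using hpre
      have hemb : Nonempty ({x // x ∈ t' d} ↪ {j : Fin m // dg j = d}) := by
        rw [Function.Embedding.nonempty_iff_card_le]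
        simpa [Fintype.card_coe, Fintype.card_subtype] using hcard
      obtain ⟨e⟩ := hemb
      refine ⟨fun j => if h : ∃ x : {x // x ∈ t' d}, (e x).1 = j then pre h.choose else 0,
        ?_, ?_, ?_⟩
      · intro j; dsimp only; split_ifs with h
        exacts [hpre1 _, I.zero_mem]
      · intro j; dsimp only; split_ifs with h
        exacts [hpre2 _, isHomogeneous_zero _ _ _]
      · intro _ x hx
        refine ⟨(e ⟨x, hx⟩).1, (e ⟨x, hx⟩).2, ?_⟩
        have hex : ∃ x' : {x // x ∈ t' d}, (e x').1 = (e ⟨x, hx⟩).1 := ⟨⟨x, hx⟩, rfl⟩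
        dsimp only
        rw [dif_pos hex]
        have hch : hex.choose = ⟨x, hx⟩ := e.injective (Subtype.ext hex.choose_spec)
        rw [hch, hpre3]
    · exact ⟨0, fun j => I.zero_mem, fun j => isHomogeneous_zero _ _ _,
        fun h => absurd h hd⟩
  choose u hu1 hu2 hu3 using key
  set ψ : Fin m → MvPolynomial (Fin n) k := fun j => u (dg j) j with hψ
  have hψ1 : ∀ j, ψ j ∈ I := fun j => hu1 _ j
  have hψ2 : ∀ j, (ψ j).IsHomogeneous (dg j) := fun j => hu2 _ j
  -- Step 3: quotient conditions for `f ∘ ψ` over K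
  have hq : ∀ d < ν, ∀ x ∈ homogeneousSubmodule (Fin n) K d, x ∈ IK →
      x ∈ Submodule.restrictScalars K (nuLowIdeal IK d) ⊔
        Submodule.span K ((f ∘ ψ) '' {j | dg j = d}) := by
    intro d hd x hx1 hx2
    have hxs : x ∈ Submodule.span K
        (f '' ((homogeneousSubmodule (Fin n) k d : Set _) ∩ (I : Set _))) := by
      have hmem : x ∈ (homogeneousSubmodule (Fin n) K d : Set (MvPolynomial (Fin n) K)) ∩
          (IK : Set _) := ⟨hx1, hx2⟩
      rw [nu_spanK_graded I hI d] at hmem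
      exact hmem
    have h2 := (ht' d hd).2.2 hxs
    have hmono : Submodule.span K ((t' d : Set (MvPolynomial (Fin n) K))) ≤
        Submodule.span K ((f ∘ ψ) '' {j | dg j = d}) := by
      apply Submodule.span_mono
      intro x' hx'
      obtain ⟨j, hj1, hj2⟩ := hu3 d hd x' hx'
      refine ⟨j, hj1, ?_⟩
      show f (ψ j) = x'
      rw [hψ]
      dsimp only
      rw [hj1, hj2]
    exact (sup_le_sup_left hmono _) h2
  have hψh : ∀ j, ((f ∘ ψ) j).IsHomogeneous (dg j) := fun j => (hψ2 j).map _
  have hψI : ∀ j, (f ∘ ψ) j ∈ IK := fun j => Ideal.mem_map_of_mem f (hψ1 j)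
  have hK := nu_quot_imp_works hψh hψI hq
  -- Step 4: descend to k
  refine ⟨ψ, hψ1, hψ2, ?_⟩
  intro μ hμ
  apply Set.Subset.antisymm
  · rintro x ⟨hx1, hx2⟩
    refine ⟨hx1, ?_⟩
    have hfx : f x ∈ (homogeneousSubmodule (Fin n) K μ : Set (MvPolynomial (Fin n) K)) ∩
        (IK : Set _) := by
      constructor
      · have hx1' : MvPolynomial.IsHomogeneous x μ := hx1
        exact (mem_homogeneousSubmodule _ _).mpr (hx1'.map _)
      · exact SetLike.mem_coe.mpr (Ideal.mem_map_of_mem f hx2)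
    rw [hK μ hμ] at hfx
    have hmap : Ideal.span (Set.range (f ∘ ψ)) = Ideal.map f (Ideal.span (Set.range ψ)) := by
      rw [Ideal.map_span, Set.range_comp]
    have hfx2 : f x ∈ (homogeneousSubmodule (Fin n) K μ : Set (MvPolynomial (Fin n) K)) ∩
        (Ideal.map f (Ideal.span (Set.range ψ)) : Set _) := by
      rw [← hmap]; exact hfx
    rw [nu_spanK_graded (Ideal.span (Set.range ψ)) (nu_span_homog_closed hψ2) μ] at hfx2
    set W : Submodule k (MvPolynomial (Fin n) k) := homogeneousSubmodule (Fin n) k μ ⊓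
      Submodule.restrictScalars k (Ideal.span (Set.range ψ)) with hW
    have hWset : (W : Set (MvPolynomial (Fin n) k)) =
        (homogeneousSubmodule (Fin n) k μ : Set _) ∩ (Ideal.span (Set.range ψ) : Set _) := by
      ext y
      simp [hW, Submodule.mem_inf]
    have hfx3 : f x ∈ Submodule.span K (f '' (W : Set _)) := by
      rw [hWset]; exact hfx2
    have := nu_descent W hfx3
    rw [hW] at this
    exact SetLike.mem_coe.mpr this.2
  · rintro x ⟨hx1, hx2⟩
    refine ⟨hx1, ?_⟩
    have hle : Ideal.span (Set.range ψ) ≤ I := by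
      rw [Ideal.span_le]; rintro g ⟨j, rfl⟩; exact hψ1 j
    exact hle hx2

end MainLemmas

theorem stmt3 {k K : Type*} [Field k] [Field K] [Algebra k K] {n : ℕ}
    (I : Ideal (MvPolynomial (Fin n) k))
    (hI : ∀ f ∈ I, ∀ d : ℕ, homogeneousComponent d f ∈ I) :
    ∀ i : ℕ, 1 ≤ i →
      nuSeq (Ideal.map (MvPolynomial.map (algebraMap k K)) I) i = nuSeq I i := by
  intro i _
  have hset : {ν : ℕ | ∃ φ : Fin (i - 1) → MvPolynomial (Fin n) K,
      (∀ j, φ j ∈ Ideal.map (MvPolynomial.map (algebraMap k K)) I) ∧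
      (∀ j, ∃ d : ℕ, (φ j).IsHomogeneous d) ∧
      ∀ μ : ℕ, μ < ν →
        (homogeneousSubmodule (Fin n) K μ : Set (MvPolynomial (Fin n) K)) ∩
          (Ideal.map (MvPolynomial.map (algebraMap k K)) I) =
        (homogeneousSubmodule (Fin n) K μ : Set (MvPolynomial (Fin n) K)) ∩
          Ideal.span (Set.range φ)} =
      {ν : ℕ | ∃ φ : Fin (i - 1) → MvPolynomial (Fin n) k,
      (∀ j, φ j ∈ I) ∧ (∀ j, ∃ d : ℕ, (φ j).IsHomogeneous d) ∧
      ∀ μ : ℕ, μ < ν →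
        (homogeneousSubmodule (Fin n) k μ : Set (MvPolynomial (Fin n) k)) ∩ I =
        (homogeneousSubmodule (Fin n) k μ : Set (MvPolynomial (Fin n) k)) ∩
          Ideal.span (Set.range φ)} := by
    ext ν
    constructor
    · rintro ⟨φ, hφI, hφh, hw⟩
      choose dg hdg using hφh
      obtain ⟨ψ, h1, h2, h3⟩ := nu_backward I hI φ dg hdg hφI hw
      exact ⟨ψ, h1, fun j => ⟨dg j, h2 j⟩, h3⟩
    · rintro ⟨φ, hφI, hφh, hw⟩
      choose dg hdg using hφh
      exact ⟨MvPolynomial.map (algebraMap k K) ∘ φ,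
        fun j => Ideal.mem_map_of_mem _ (hφI j),
        fun j => ⟨dg j, (hdg j).map _⟩,
        nu_forward I hI φ dg hdg hφI hw⟩
  unfold nuSeq
  rw [hset]
end

section
/- Let A be a finitely generated graded algebra of Krull dimension d over a field k, generated as a k-algebra by its degree-one part A_1. Then H(A)(n) ≥ Φ^{(d)}(n) for all n ∈ ℕ, and equality holds for all n if and only if A is isomorphic as a graded k-algebra to the polynomial ring k[X_1,…,X_d] with its standard grading. -/
/-- `Φ^{(t)}(n) = binom(n+t-1, n)`, the Hilbert function of a polynomial ring
in `t` variables. -/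
def phiFn (t n : ℕ) : ℕ := Nat.choose (n + t - 1) n

section Aux

open Submodule Pointwise

section GradedLemmas

variable {k A : Type*} [Field k] [CommRing A] [Algebra k A]
  (𝒜 : ℕ → Submodule k A) [GradedAlgebra 𝒜]

/-- Projection: if `x ∈ 𝒜 n` and `x` lies in a supremum of submodules each inside the
corresponding graded piece, then `x` is in the `n`-th one. -/
theorem mem_of_mem_iSup_graded (M : ℕ → Submodule k A) (hM : ∀ m, M m ≤ 𝒜 m)
    {n : ℕ} {x : A} (hxn : x ∈ 𝒜 n) (hx : x ∈ ⨆ m, M m) : x ∈ M n := by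
  classical
  obtain ⟨f, hf, hsum⟩ := (Submodule.mem_iSup_iff_exists_finsupp M x).1 hx
  set g : A →+ A := AddMonoidHom.mk' (fun y => ((DirectSum.decompose 𝒜 y) n : A)) (by
    intro a b
    simp [DirectSum.decompose_add]) with hg
  have hgx : g x = x := DirectSum.decompose_of_mem_same 𝒜 hxn
  have : g x = f.sum fun i xi => g xi := by
    rw [← hsum]; exact map_finsuppSum g f _
  have hterm : ∀ i ∈ f.support, g (f i) = if i = n then f i else 0 := by
    intro i _
    by_cases hi : i = n
    · subst hi; simp only [if_pos rfl, hg, AddMonoidHom.mk'_apply, ]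
      exact DirectSum.decompose_of_mem_same 𝒜 (hM i (hf i))
    · simp only [if_neg hi, hg, AddMonoidHom.mk'_apply]
      exact DirectSum.decompose_of_mem_ne 𝒜 (hM i (hf i)) hi
  rw [Finsupp.sum, Finset.sum_congr rfl hterm] at this
  rw [Finset.sum_ite_eq' f.support n (fun _ => f _)] at this
  by_cases hn : n ∈ f.support
  · rw [if_pos hn] at this
    rw [hgx] at this
    rw [this]; exact hf n
  · rw [if_neg hn] at this
    rw [hgx] at this
    rw [this]; exact (M n).zero_mem

theorem pow_le_graded (W : Submodule k A) (hW : W ≤ 𝒜 1) : ∀ n, W ^ n ≤ 𝒜 n := by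
  intro n
  induction n with
  | zero =>
    rw [pow_zero, Submodule.one_le]
    exact SetLike.one_mem_graded 𝒜
  | succ m ih =>
    rw [pow_succ]
    refine Submodule.mul_le.2 fun a ha b hb => ?_
    exact SetLike.mul_mem_graded (ih ha) (hW hb)

theorem graded_eq_pow (W : Submodule k A) (hW : W ≤ 𝒜 1)
    (htop : Algebra.adjoin k (W : Set A) = ⊤) (n : ℕ) : 𝒜 n = W ^ n := by
  refine le_antisymm ?_ (pow_le_graded 𝒜 W hW n)
  intro x hx
  refine mem_of_mem_iSup_graded 𝒜 (fun m => W ^ m) (pow_le_graded 𝒜 W hW) hx ?_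
  have hxtop : x ∈ (⊤ : Subalgebra k A) := trivial
  rw [← htop] at hxtop
  have hxspan : x ∈ Submodule.span k (↑(Submonoid.closure (W : Set A)) : Set A) := by
    rw [← Algebra.adjoin_eq_span]; exact hxtop
  refine Submodule.span_le.2 ?_ hxspan
  intro u hu
  have : ∃ m, u ∈ W ^ m := by
    refine Submonoid.closure_induction (fun y hy => ⟨1, by rwa [pow_one]⟩) ⟨0, by
      rw [pow_zero]; exact Submodule.one_le.1 le_rfl⟩ ?_ hu
    rintro y z - - ⟨my, hy⟩ ⟨mz, hz⟩
    exact ⟨my + mz, by rw [pow_add]; exact Submodule.mul_mem_mul hy hz⟩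
  obtain ⟨m, hm⟩ := this
  exact Submodule.mem_iSup_of_mem m hm

theorem exists_finset_span (hfg : Algebra.FiniteType k A)
    (hgen : Algebra.adjoin k ((𝒜 1 : Submodule k A) : Set A) = ⊤) :
    ∃ F : Finset A, (↑F : Set A) ⊆ (𝒜 1 : Set A) ∧ Submodule.span k (↑F : Set A) = 𝒜 1 := by
  classical
  obtain ⟨S, hS⟩ := hfg.1
  -- each element of A lies in the adjoin of a finite subset of 𝒜 1
  have key : ∀ x : A, ∃ t : Finset A, (↑t : Set A) ⊆ (𝒜 1 : Set A) ∧ x ∈ Algebra.adjoin k (↑t : Set A) := by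
    intro x
    have hx : x ∈ Algebra.adjoin k ((𝒜 1 : Submodule k A) : Set A) := by rw [hgen]; trivial
    refine Algebra.adjoin_induction (fun y hy => ⟨{y}, by simpa using hy, Algebra.subset_adjoin (by simp)⟩)
      (fun r => ⟨∅, by simp, Subalgebra.algebraMap_mem _ r⟩) ?_ ?_ hx
    · rintro y z - - ⟨ty, hty, hy⟩ ⟨tz, htz, hz⟩
      refine ⟨ty ∪ tz, by simp [Set.union_subset_iff, hty, htz], ?_⟩
      exact add_mem (Algebra.adjoin_mono (by simp [Set.subset_union_left]) hy)
        (Algebra.adjoin_mono (by simp [Set.subset_union_right]) hz)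
    · rintro y z - - ⟨ty, hty, hy⟩ ⟨tz, htz, hz⟩
      refine ⟨ty ∪ tz, by simp [Set.union_subset_iff, hty, htz], ?_⟩
      exact mul_mem (Algebra.adjoin_mono (by simp [Set.subset_union_left]) hy)
        (Algebra.adjoin_mono (by simp [Set.subset_union_right]) hz)
  choose t ht1 ht2 using key
  set F : Finset A := S.biUnion t with hF
  have hFsub : (↑F : Set A) ⊆ (𝒜 1 : Set A) := by
    intro y hy
    simp only [hF, Finset.coe_biUnion, Set.mem_iUnion] at hy
    obtain ⟨s, -, hy⟩ := hy
    exact ht1 s hy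
  have hFtop : Algebra.adjoin k (↑F : Set A) = ⊤ := by
    rw [eq_top_iff, ← hS]
    refine Algebra.adjoin_le ?_
    intro s hs
    refine Algebra.adjoin_mono ?_ (ht2 s)
    intro y hy
    simp only [hF, Finset.coe_biUnion, Set.mem_iUnion]
    exact ⟨s, hs, hy⟩
  refine ⟨F, hFsub, ?_⟩
  have hWle : Submodule.span k (↑F : Set A) ≤ 𝒜 1 := Submodule.span_le.2 hFsub
  have := graded_eq_pow 𝒜 (Submodule.span k (↑F : Set A)) hWle
    (by rw [Algebra.adjoin_span, hFtop]) 1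
  rw [this, pow_one]

theorem finiteDimensional_graded (hfg : Algebra.FiniteType k A)
    (hgen : Algebra.adjoin k ((𝒜 1 : Submodule k A) : Set A) = ⊤) (n : ℕ) :
    FiniteDimensional k (𝒜 n) := by
  obtain ⟨F, hF1, hF2⟩ := exists_finset_span 𝒜 hfg hgen
  have hWle : Submodule.span k (↑F : Set A) ≤ 𝒜 1 := Submodule.span_le.2 hF1
  have h := graded_eq_pow 𝒜 (Submodule.span k (↑F : Set A)) hWle
    (by rw [hF2]; exact hgen) n
  rw [← Submodule.fg_iff_finiteDimensional, h, Submodule.span_pow]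
  have hfin : ((↑F : Set A) ^ n).Finite := by
    clear h
    induction n with
    | zero => simpa [pow_zero] using Set.finite_singleton 1
    | succ m ih => rw [pow_succ]; exact ih.mul (F.finite_toSet)
  exact ⟨hfin.toFinset, by simp⟩

end GradedLemmas


section ChainIndep

variable {k : Type*} {A : Type*} [Field k] [CommRing A] [Algebra k A]

open MvPolynomial

/-- divX induction: elementary key step. -/
theorem eval₂_polynomial_zero {C : Type*} [CommRing C] (φ : C →+* A) (q p : Ideal A)
    (hq : q.IsPrime) (hqp : q ≤ p) {x : A} (hxp : x ∈ p) (hxq : x ∉ q)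
    (hφ : ∀ c : C, φ c ∈ p → c = 0) :
    ∀ P : Polynomial C, Polynomial.eval₂ φ x P ∈ q → P = 0 := by
  suffices H : ∀ (n : ℕ) (P : Polynomial C), P.natDegree = n → Polynomial.eval₂ φ x P ∈ q → P = 0 by
    exact fun P hP => H P.natDegree P rfl hP
  intro n
  induction n using Nat.strong_induction_on with
  | _ n ih =>
  intro P hn hP
  have hc0 : P.coeff 0 = 0 := by
    apply hφ
    have hPsplit : Polynomial.eval₂ φ x P
        = x * Polynomial.eval₂ φ x P.divX + φ (P.coeff 0) := by
      conv_lhs => rw [← Polynomial.X_mul_divX_add (p := P)]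
      rw [Polynomial.eval₂_add, Polynomial.eval₂_mul, Polynomial.eval₂_X, Polynomial.eval₂_C]
    have : φ (P.coeff 0) = Polynomial.eval₂ φ x P - x * Polynomial.eval₂ φ x P.divX := by
      rw [hPsplit]; ring
    rw [this]
    exact Ideal.sub_mem p (hqp hP) (Ideal.mul_mem_right _ _ hxp)
  rcases Nat.eq_zero_or_pos n with h0 | hpos
  · subst h0
    rw [Polynomial.eq_C_of_natDegree_eq_zero hn, hc0, map_zero]
  · have hPne : P ≠ 0 := by
      intro h; subst h; simp at hn; omega
    have hdiv : Polynomial.eval₂ φ x P.divX ∈ q := by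
      have hPsplit : Polynomial.eval₂ φ x P = x * Polynomial.eval₂ φ x P.divX := by
        conv_lhs => rw [← Polynomial.X_mul_divX_add (p := P)]
        rw [Polynomial.eval₂_add, Polynomial.eval₂_mul, Polynomial.eval₂_X, Polynomial.eval₂_C,
          hc0, map_zero, add_zero]
      rw [hPsplit] at hP
      rcases hq.mem_or_mem hP with h | h
      · exact absurd h hxq
      · exact h
    have hlt : P.divX.natDegree < n := by
      rw [← hn, Polynomial.natDegree_divX_eq_natDegree_tsub_one]
      omega
    have := ih P.divX.natDegree hlt P.divX rfl hdiv
    have hP0 : P = Polynomial.C (P.coeff 0) := by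
      conv_lhs => rw [← Polynomial.X_mul_divX_add (p := P)]
      rw [this, mul_zero, zero_add]
    rw [hP0, hc0, map_zero]

theorem aeval_cons_eq_eval₂ (x : A) {m : ℕ} (θ : Fin m → A)
    (f : MvPolynomial (Fin (m + 1)) k) :
    aeval (Fin.cons x θ : Fin (m + 1) → A) f =
      Polynomial.eval₂ (↑(aeval θ : MvPolynomial (Fin m) k →ₐ[k] A) : MvPolynomial (Fin m) k →+* A)
        x (finSuccEquiv k m f) := by
  have h : (aeval (Fin.cons x θ : Fin (m + 1) → A) : MvPolynomial (Fin (m+1)) k →ₐ[k] A)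
      = (Polynomial.eval₂AlgHom (aeval θ) x (fun p => Commute.all _ _)).comp
        (finSuccEquiv k m).toAlgHom := by
    apply MvPolynomial.algHom_ext
    intro i
    refine Fin.cases ?_ ?_ i
    · simp [finSuccEquiv_X_zero]
    · intro j
      simp [finSuccEquiv_X_succ]
  rw [show aeval (Fin.cons x θ : Fin (m + 1) → A) f
      = (aeval (Fin.cons x θ : Fin (m + 1) → A) : MvPolynomial (Fin (m+1)) k →ₐ[k] A) f from rfl, h]
  rfl

/-- Extending an "algebraically independent mod p" family downward along a chain. -/
theorem cons_indep_mod {q p : Ideal A} (hq : q.IsPrime) (hp : p.IsPrime) (hqp : q ≤ p)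
    {x : A} (hxp : x ∈ p) (hxq : x ∉ q) {m : ℕ} {θ : Fin m → A}
    (hθ : ∀ f : MvPolynomial (Fin m) k, aeval θ f ∈ p → f = 0) :
    ∀ f : MvPolynomial (Fin (m + 1)) k, aeval (Fin.cons x θ : Fin (m+1) → A) f ∈ q → f = 0 := by
  intro f hf
  rw [aeval_cons_eq_eval₂] at hf
  have := eval₂_polynomial_zero _ q p hq hqp hxp hxq (fun c hc => hθ c hc) _ hf
  have h2 := congrArg (finSuccEquiv k m).symm this
  rwa [AlgEquiv.symm_apply_apply, map_zero] at h2

/-- From a chain of primes of length `d`, get `d` elements "algebraically independent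
mod the bottom prime". -/
theorem chain_indep_mod : ∀ (d : ℕ) (q : Fin (d + 1) → Ideal A),
    (∀ i, (q i).IsPrime) → (StrictMono q) →
    ∃ x : Fin d → A, ∀ f : MvPolynomial (Fin d) k, aeval x f ∈ q 0 → f = 0 := by
  intro d
  induction d with
  | zero =>
    intro q hq _
    refine ⟨Fin.elim0, fun f hf => ?_⟩
    obtain ⟨c, rfl⟩ := MvPolynomial.C_surjective (Fin 0) f
    by_contra hc
    have hc0 : c ≠ 0 := fun h => hc (by rw [h, map_zero])
    have : (1 : A) ∈ q 0 := by
      have := Ideal.mul_mem_left (q 0) (algebraMap k A c⁻¹) (by simpa using hf)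
      rwa [← map_mul, inv_mul_cancel₀ hc0, map_one] at this
    exact (hq 0).ne_top (Ideal.eq_top_iff_one _ |>.2 this)
  | succ m ih =>
    intro q hq hmono
    obtain ⟨θ, hθ⟩ := ih (fun i => q i.succ) (fun i => hq _)
      (fun i j hij => hmono (by simpa using hij))
    have h01 : q 0 < q 1 := hmono (by norm_num)
    obtain ⟨x, hx1, hx0⟩ := SetLike.exists_of_lt h01
    have hx : ∀ f : MvPolynomial (Fin (m + 1)) k,
        aeval (Fin.cons x θ : Fin (m+1) → A) f ∈ q 0 → f = 0 := by
      refine cons_indep_mod (hq 0) (hq 1) (le_of_lt h01) hx1 hx0 ?_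
      intro f hf
      exact hθ f (by simpa using hf)
    exact ⟨Fin.cons x θ, hx⟩

end ChainIndep


section Exchange

variable {k L : Type*} [Field k] [Field L] [Algebra k L]

open MvPolynomial

set_option synthInstance.maxHeartbeats 1000000 in
set_option maxHeartbeats 1000000 in
/-- Algebraic elements over a subalgebra of a field are closed under the generated
subalgebra. -/
theorem isAlgebraic_of_mem_adjoin {R₀ : Subalgebra k L} {S : Set L}
    (hS : ∀ s ∈ S, IsAlgebraic R₀ s) {a : L} (ha : a ∈ Algebra.adjoin k S) :
    IsAlgebraic R₀ a := by
  letI : Algebra (FractionRing R₀) L := FractionRing.liftAlgebra R₀ L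
  haveI : IsScalarTower R₀ (FractionRing R₀) L := FractionRing.isScalarTower_liftAlgebra R₀ L
  have key : ∀ b : L, IsAlgebraic R₀ b ↔ IsAlgebraic (FractionRing R₀) b := fun b =>
    IsFractionRing.isAlgebraic_iff R₀ (FractionRing R₀) L
  have hT : ∀ b : L, IsAlgebraic (FractionRing R₀) b ↔ b ∈ integralClosure (FractionRing R₀) L :=
    fun b => isAlgebraic_iff_isIntegral
  refine Algebra.adjoin_induction (fun s hs => ?_) (fun r => ?_) (fun u v _ _ hu hv => ?_)
    (fun u v _ _ hu hv => ?_) ha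
  · exact hS s hs
  · rw [key, hT]
    have : algebraMap k L r ∈ R₀ := Subalgebra.algebraMap_mem R₀ r
    have := isAlgebraic_algebraMap (⟨algebraMap k L r, this⟩ : R₀) (A := L)
    rw [key, hT] at this
    simpa using this
  · rw [key, hT] at hu hv ⊢
    exact add_mem hu hv
  · rw [key, hT] at hu hv ⊢
    exact mul_mem hu hv

/-- Criterion for updating one coordinate of an algebraically independent family. -/
theorem update_indep_iff {d : ℕ} (z : Fin d → L) (i₀ : Fin d)
    (hrest : AlgebraicIndependent k (fun j : {j : Fin d // j ≠ i₀} => z j)) (a : L) :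
    AlgebraicIndependent k (Function.update z i₀ a) ↔
      Transcendental (Algebra.adjoin k (Set.range (fun j : {j : Fin d // j ≠ i₀} => z j))) a := by
  classical
  rw [← hrest.option_iff_transcendental a]
  refine algebraicIndependent_equiv' (Equiv.optionSubtypeNe i₀) ?_ |>.symm
  funext o
  rcases o with - | ⟨j, hj⟩
  · simp [Equiv.optionSubtypeNe]
  · simp only [Function.comp_apply, Option.elim]
    rw [show (Equiv.optionSubtypeNe i₀) (some ⟨j, hj⟩) = j by simp [Equiv.optionSubtypeNe]]
    rw [Function.update_of_ne hj]

/-- One exchange step: one coordinate of an independent family can be replaced by a member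
of any generating set. -/
theorem exchange_step {d : ℕ} (z : Fin d → L) (hz : AlgebraicIndependent k z) (i₀ : Fin d)
    (S : Set L) (hz0 : z i₀ ∈ Algebra.adjoin k S) :
    ∃ s ∈ S, AlgebraicIndependent k (Function.update z i₀ s) := by
  classical
  by_contra hcon
  push_neg at hcon
  have hrest : AlgebraicIndependent k (fun j : {j : Fin d // j ≠ i₀} => z j) :=
    hz.comp (Subtype.val : {j : Fin d // j ≠ i₀} → Fin d) Subtype.val_injective
  have halg : ∀ s ∈ S, IsAlgebraic (Algebra.adjoin k (Set.range (fun j : {j : Fin d // j ≠ i₀} => z j))) s := by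
    intro s hs
    have := hcon s hs
    rw [update_indep_iff z i₀ hrest s] at this
    · simpa [Transcendental] using this
  have : IsAlgebraic (Algebra.adjoin k (Set.range (fun j : {j : Fin d // j ≠ i₀} => z j))) (z i₀) :=
    isAlgebraic_of_mem_adjoin halg hz0
  have hself : AlgebraicIndependent k (Function.update z i₀ (z i₀)) := by
    rw [Function.update_eq_self]; exact hz
  rw [update_indep_iff z i₀ hrest (z i₀)] at hself
  exact hself this

open scoped Classical in
/-- Iterated exchange: an algebraically independent family inside `adjoin k S` can be
replaced by one with values in `S`. -/
theorem exchange_all {d : ℕ} (S : Set L) :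
    ∀ (m : ℕ) (z : Fin d → L), AlgebraicIndependent k z → (∀ i, z i ∈ Algebra.adjoin k S) →
    (Finset.univ.filter (fun i => z i ∉ S)).card = m →
    ∃ w : Fin d → L, (∀ i, w i ∈ S) ∧ AlgebraicIndependent k w := by
  classical
  intro m
  induction m using Nat.strong_induction_on with
  | _ m ih =>
  intro z hz hzS hm
  rcases Nat.eq_zero_or_pos m with h0 | hpos
  · subst h0
    rw [Finset.card_eq_zero, Finset.filter_eq_empty_iff] at hm
    refine ⟨z, fun i => ?_, hz⟩
    have := hm (Finset.mem_univ i)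
    simpa using this
  · have hne : (Finset.univ.filter (fun i => z i ∉ S)).Nonempty := by
      rw [← Finset.card_pos, hm]; exact hpos
    obtain ⟨i₀, hi₀⟩ := hne
    rw [Finset.mem_filter] at hi₀
    obtain ⟨s, hsS, hindep⟩ := exchange_step z hz i₀ S (hzS i₀)
    have hcard : (Finset.univ.filter (fun i => Function.update z i₀ s i ∉ S)).card < m := by
      rw [← hm]
      apply Finset.card_lt_card
      constructor
      · intro j hj
        rw [Finset.mem_filter] at hj ⊢
        rcases eq_or_ne j i₀ with rfl | hji
        · exact absurd hsS (by simpa using hj.2)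
        · rw [Function.update_of_ne hji] at hj
          exact ⟨hj.1, hj.2⟩
      · intro hsub
        have := hsub (Finset.mem_filter.2 ⟨Finset.mem_univ i₀, hi₀.2⟩)
        rw [Finset.mem_filter, Function.update_self] at this
        exact this.2 hsS
    refine ih _ hcard (Function.update z i₀ s) hindep ?_ rfl
    intro i
    rcases eq_or_ne i i₀ with rfl | hii
    · rw [Function.update_self]; exact Algebra.subset_adjoin hsS
    · rw [Function.update_of_ne hii]; exact hzS i

end Exchange



section Counting

open MvPolynomial

variable {k A : Type*} [Field k] [CommRing A] [Algebra k A]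
  (𝒜 : ℕ → Submodule k A) [GradedAlgebra 𝒜]

/-- The type of exponent vectors of total degree `n` has cardinality `phiFn d n`. -/
noncomputable def degreeEquivSym (d n : ℕ) :
    {σ : Fin d →₀ ℕ // σ.degree = n} ≃ Sym (Fin d) n where
  toFun := fun σ => ⟨Finsupp.toMultiset σ.1, by
    rw [Finsupp.card_toMultiset]
    simpa [Finsupp.degree_apply, Finsupp.sum] using σ.2⟩
  invFun := fun m => ⟨Multiset.toFinsupp m.1, by
    have : (Finsupp.toMultiset (Multiset.toFinsupp m.1)).card = n := by
      rw [Multiset.toFinsupp_toMultiset]; exact m.2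
    rw [Finsupp.card_toMultiset] at this
    simpa [Finsupp.degree_apply, Finsupp.sum] using this⟩
  left_inv := fun σ => by simp
  right_inv := fun m => by
    apply Subtype.ext
    simp

noncomputable instance degreeFintype (d n : ℕ) : Fintype {σ : Fin d →₀ ℕ // σ.degree = n} :=
  Fintype.ofEquiv _ (degreeEquivSym d n).symm

theorem card_degree_eq (d n : ℕ) :
    Fintype.card {σ : Fin d →₀ ℕ // σ.degree = n} = phiFn d n := by
  rw [Fintype.card_congr (degreeEquivSym d n), Sym.card_sym_eq_multichoose,
    Nat.multichoose_eq, Fintype.card_fin, phiFn]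
  rw [Nat.add_comm d n]

theorem phiFn_le_finrank_graded {d n : ℕ} (θ : Fin d → A) (hθ1 : ∀ i, θ i ∈ 𝒜 1)
    (hind : ∀ f : MvPolynomial (Fin d) k, aeval θ f = 0 → f = 0)
    [FiniteDimensional k (𝒜 n)] :
    phiFn d n ≤ Module.finrank k (𝒜 n) := by
  have hmem : ∀ σ : {σ : Fin d →₀ ℕ // σ.degree = n},
      aeval θ (monomial σ.1 (1 : k)) ∈ 𝒜 n := by
    rintro ⟨σ, hσ⟩
    rw [aeval_monomial, map_one, one_mul, Finsupp.prod]
    have := SetLike.prod_pow_mem_graded 𝒜 (fun _ => 1) θ (F := σ.support) σ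
      (fun i _ => hθ1 i)
    have heq : (∑ i ∈ σ.support, σ i • 1) = n := by
      simpa [Finsupp.degree_apply, smul_eq_mul] using hσ
    rwa [heq] at this
  set F : {σ : Fin d →₀ ℕ // σ.degree = n} → 𝒜 n :=
    fun σ => ⟨aeval θ (monomial σ.1 (1 : k)), hmem σ⟩ with hF
  have hli : LinearIndependent k F := by
    apply LinearIndependent.of_comp (𝒜 n).subtype
    have hmono : LinearIndependent k
        (fun σ : {σ : Fin d →₀ ℕ // σ.degree = n} => (monomial σ.1 (1 : k) : MvPolynomial (Fin d) k)) := by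
      have := (MvPolynomial.basisMonomials (Fin d) k).linearIndependent
      have h2 := this.comp (Subtype.val : {σ : Fin d →₀ ℕ // σ.degree = n} → (Fin d →₀ ℕ))
        Subtype.val_injective
      rw [MvPolynomial.coe_basisMonomials] at h2
      exact h2
    have hker : LinearMap.ker (aeval θ : MvPolynomial (Fin d) k →ₐ[k] A).toLinearMap = ⊥ := by
      rw [LinearMap.ker_eq_bot']
      intro p hp
      exact hind p hp
    have := hmono.map' (aeval θ : MvPolynomial (Fin d) k →ₐ[k] A).toLinearMap hker
    exact this
  have := hli.fintype_card_le_finrank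
  rwa [card_degree_eq] at this

end Counting





open MvPolynomial

section Part2

variable (k : Type*) [Field k]

noncomputable def homEquiv (d n : ℕ) :
    (homogeneousSubmodule (Fin d) k n) ≃ₗ[k] ({σ : Fin d →₀ ℕ // σ.degree = n} →₀ k) := by
  rw [homogeneousSubmodule_eq_finsupp_supported]
  exact AddMonoidAlgebra.supportedEquivFinsupp {d_1 : Fin d →₀ ℕ | d_1.degree = n}

instance homFD (d n : ℕ) : FiniteDimensional k (homogeneousSubmodule (Fin d) k n) :=
  Module.Finite.equiv (homEquiv k d n).symm

theorem finrank_homogeneousSubmodule (d n : ℕ) :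
    Module.finrank k (homogeneousSubmodule (Fin d) k n) = phiFn d n := by
  rw [(homEquiv k d n).finrank_eq]
  rw [Module.finrank_finsupp_self, card_degree_eq]

variable {k}
variable {A : Type*} [CommRing A] [Algebra k A]
  (𝒜 : ℕ → Submodule k A) [GradedAlgebra 𝒜]

/-- Uniqueness of graded decompositions. -/
theorem graded_component_of_sum (y : ℕ → A) (hy : ∀ i, y i ∈ 𝒜 i) {N n : ℕ} {x : A}
    (hx : x ∈ 𝒜 n) (hsum : ∑ i ∈ Finset.range N, y i = x) :
    x = if n < N then y n else 0 := by
  classical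
  set g : A →+ A := AddMonoidHom.mk' (fun z => ((DirectSum.decompose 𝒜 z) n : A)) (by
    intro a b; simp [DirectSum.decompose_add]) with hg
  have hgx : g x = x := DirectSum.decompose_of_mem_same 𝒜 hx
  have h1 : g x = ∑ i ∈ Finset.range N, g (y i) := by rw [← hsum, map_sum]
  have hterm : ∀ i ∈ Finset.range N, g (y i) = if i = n then y i else 0 := by
    intro i _
    by_cases hi : i = n
    · subst hi; simp only [if_pos rfl, hg, AddMonoidHom.mk'_apply]
      exact DirectSum.decompose_of_mem_same 𝒜 (hy i)
    · simp only [if_neg hi, hg, AddMonoidHom.mk'_apply]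
      exact DirectSum.decompose_of_mem_ne 𝒜 (hy i) hi
  rw [Finset.sum_congr rfl hterm, Finset.sum_ite_eq' (Finset.range N) n y] at h1
  rw [hgx] at h1
  simpa [Finset.mem_range] using h1

theorem aeval_mem_graded {d n : ℕ} (θ : Fin d → A) (hθ1 : ∀ i, θ i ∈ 𝒜 1)
    {f : MvPolynomial (Fin d) k} (hf : f ∈ homogeneousSubmodule (Fin d) k n) :
    aeval θ f ∈ 𝒜 n := by
  have hsum : aeval θ f = ∑ σ ∈ f.support, aeval θ (monomial σ (coeff σ f)) := by
    rw [← map_sum, ← f.as_sum]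
  rw [hsum]
  apply Submodule.sum_mem
  intro σ hσ
  rw [aeval_monomial]
  have hdeg : (σ.sum fun _ e => e) = n := by
    have := (mem_homogeneousSubmodule n f).1 hf (mem_support_iff.1 hσ)
    simpa [Finsupp.weight, Finsupp.degree, Finsupp.linearCombination, Finsupp.sum] using this
  have hprod : (σ.prod fun i e => θ i ^ e) ∈ 𝒜 n := by
    rw [Finsupp.prod]
    have := SetLike.prod_pow_mem_graded 𝒜 (fun _ => 1) θ (F := σ.support) σ (fun i _ => hθ1 i)
    have heq : (∑ i ∈ σ.support, σ i • 1) = n := by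
      simpa [smul_eq_mul, Finsupp.sum] using hdeg
    rwa [heq] at this
  rw [Algebra.smul_def (coeff σ f) _ |>.symm]
  exact Submodule.smul_mem _ _ hprod

theorem part2_forward {d : ℕ}
    (hgen : Algebra.adjoin k ((𝒜 1 : Submodule k A) : Set A) = ⊤)
    (hFD : ∀ n, FiniteDimensional k (𝒜 n))
    (heq : ∀ n : ℕ, Module.finrank k (𝒜 n) = phiFn d n) :
    ∃ e : A ≃ₐ[k] MvPolynomial (Fin d) k, ∀ (n : ℕ) (x : A),
      x ∈ 𝒜 n ↔ e x ∈ MvPolynomial.homogeneousSubmodule (Fin d) k n := by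
  classical
  haveI := hFD 1
  have hrank1 : Module.finrank k (𝒜 1) = d := by
    rw [heq 1]; simp [phiFn]
  set b := Module.finBasisOfFinrankEq k (𝒜 1) hrank1 with hb
  set θ : Fin d → A := fun i => (b i : A) with hθ
  have hθ1 : ∀ i, θ i ∈ 𝒜 1 := fun i => (b i).2
  set ψ : MvPolynomial (Fin d) k →ₐ[k] A := aeval θ with hψ
  -- surjectivity
  have hspan : Submodule.span k (Set.range θ) = 𝒜 1 := by
    have h1 : Submodule.span k (Set.range (fun i => b i)) = (⊤ : Submodule k (𝒜 1)) :=
      b.span_eq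
    have h2 := congrArg (Submodule.map (𝒜 1).subtype) h1
    rw [Submodule.map_span, Submodule.map_top, Submodule.range_subtype] at h2
    rw [← h2]
    congr 1
    rw [← Set.range_comp]
    rfl
  have hadj : Algebra.adjoin k (Set.range θ) = ⊤ := by
    rw [eq_top_iff, ← hgen]
    apply Algebra.adjoin_le
    intro x hx
    have hx2 : x ∈ Submodule.span k (Set.range θ) := by rw [hspan]; exact hx
    have hsub : Submodule.span k (Set.range θ) ≤ Subalgebra.toSubmodule (Algebra.adjoin k (Set.range θ)) :=
      Submodule.span_le.2 (fun y hy => Algebra.subset_adjoin hy)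
    exact hsub hx2
  have hsurj : Function.Surjective ψ := by
    intro x
    have : x ∈ (aeval θ : MvPolynomial (Fin d) k →ₐ[k] A).range := by
      rw [← Algebra.adjoin_range_eq_range_aeval, hadj]; trivial
    exact this
  -- graded piece maps
  have hψmem : ∀ (n : ℕ) (f : MvPolynomial (Fin d) k), f ∈ homogeneousSubmodule (Fin d) k n →
      ψ f ∈ 𝒜 n := fun n f hf => aeval_mem_graded 𝒜 θ hθ1 hf
  -- surjectivity on graded pieces
  have hpiece_surj : ∀ (n : ℕ) (x : A), x ∈ 𝒜 n →
      ∃ f ∈ homogeneousSubmodule (Fin d) k n, ψ f = x := by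
    intro n x hx
    obtain ⟨p, hp⟩ := hsurj x
    have hdecomp : ∑ i ∈ Finset.range (p.totalDegree + 1), ψ (homogeneousComponent i p) = x := by
      rw [← map_sum, sum_homogeneousComponent, hp]
    have := graded_component_of_sum 𝒜 (fun i => ψ (homogeneousComponent i p))
      (fun i => hψmem i _ ((mem_homogeneousSubmodule i _).2 (homogeneousComponent_isHomogeneous i p)))
      hx hdecomp
    by_cases hn : n < p.totalDegree + 1
    · rw [if_pos hn] at this
      exact ⟨homogeneousComponent n p,
        (mem_homogeneousSubmodule n _).2 (homogeneousComponent_isHomogeneous n p), this.symm⟩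
    · rw [if_neg hn] at this
      exact ⟨0, Submodule.zero_mem _, by rw [map_zero, this]⟩
  -- the restricted maps on graded pieces
  have hFDhom : ∀ n, FiniteDimensional k (homogeneousSubmodule (Fin d) k n) := fun n => homFD k d n
  have hpiece_inj : ∀ (n : ℕ) (f : MvPolynomial (Fin d) k), f ∈ homogeneousSubmodule (Fin d) k n →
      ψ f = 0 → f = 0 := by
    intro n
    haveI := hFD n
    set ρ : (homogeneousSubmodule (Fin d) k n) →ₗ[k] (𝒜 n) :=
      LinearMap.codRestrict (𝒜 n) ((ψ.toLinearMap).comp (homogeneousSubmodule (Fin d) k n).subtype)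
        (fun f => hψmem n f.1 f.2) with hρ
    have hρsurj : Function.Surjective ρ := by
      rintro ⟨x, hx⟩
      obtain ⟨f, hf, hfx⟩ := hpiece_surj n x hx
      exact ⟨⟨f, hf⟩, Subtype.ext hfx⟩
    have hrange : LinearMap.range ρ = ⊤ := LinearMap.range_eq_top.2 hρsurj
    have hrk := LinearMap.finrank_range_add_finrank_ker ρ
    rw [hrange, finrank_top, heq n, ← finrank_homogeneousSubmodule k d n] at hrk
    have hker0 : Module.finrank k (LinearMap.ker ρ) = 0 := by omega
    have hker : LinearMap.ker ρ = ⊥ := Submodule.finrank_eq_zero.1 hker0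
    intro f hf hψf
    have : (⟨f, hf⟩ : homogeneousSubmodule (Fin d) k n) ∈ LinearMap.ker ρ := by
      rw [LinearMap.mem_ker]
      apply Subtype.ext
      exact hψf
    rw [hker, Submodule.mem_bot] at this
    exact congrArg Subtype.val this
  -- global injectivity
  have hinj : Function.Injective ψ := by
    rw [injective_iff_map_eq_zero]
    intro p hp
    have hcomp : ∀ i, homogeneousComponent i p = 0 := by
      intro i
      rcases Nat.lt_or_ge i (p.totalDegree + 1) with hi | hi
      · have hdecomp : ∑ j ∈ Finset.range (p.totalDegree + 1), ψ (homogeneousComponent j p)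
            = (0 : A) := by rw [← map_sum, sum_homogeneousComponent, hp]
        have := graded_component_of_sum 𝒜 (fun j => ψ (homogeneousComponent j p))
          (fun j => hψmem j _ ((mem_homogeneousSubmodule j _).2 (homogeneousComponent_isHomogeneous j p)))
          (Submodule.zero_mem (𝒜 i)) hdecomp
        rw [if_pos hi] at this
        exact hpiece_inj i _ ((mem_homogeneousSubmodule i _).2 (homogeneousComponent_isHomogeneous i p))
          this.symm
      · apply homogeneousComponent_eq_zero
        omega
    have := sum_homogeneousComponent p
    rw [Finset.sum_congr rfl (fun i _ => hcomp i)] at this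
    simpa using this.symm
  set eAlg : MvPolynomial (Fin d) k ≃ₐ[k] A := AlgEquiv.ofBijective ψ ⟨hinj, hsurj⟩ with heAlg
  refine ⟨eAlg.symm, ?_⟩
  intro n x
  constructor
  · intro hx
    obtain ⟨f, hf, hfx⟩ := hpiece_surj n x hx
    have : eAlg.symm x = f := by
      rw [← hfx]
      exact eAlg.symm_apply_apply f
    rw [this]
    exact hf
  · intro hx
    have : x = ψ (eAlg.symm x) := (eAlg.apply_symm_apply x).symm
    rw [this]
    exact hψmem n _ hx

theorem part2_backward {d : ℕ} (e : A ≃ₐ[k] MvPolynomial (Fin d) k)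
    (he : ∀ (n : ℕ) (x : A), x ∈ 𝒜 n ↔ e x ∈ MvPolynomial.homogeneousSubmodule (Fin d) k n)
    (n : ℕ) : Module.finrank k (𝒜 n) = phiFn d n := by
  set eL : A ≃ₗ[k] MvPolynomial (Fin d) k := e.toLinearEquiv with heL
  have hmap : Submodule.map (eL : A →ₗ[k] MvPolynomial (Fin d) k) (𝒜 n)
      = homogeneousSubmodule (Fin d) k n := by
    ext y
    rw [Submodule.mem_map]
    constructor
    · rintro ⟨x, hx, rfl⟩
      exact (he n x).1 hx
    · intro hy
      refine ⟨e.symm y, (he n _).2 ?_, ?_⟩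
      · rw [AlgEquiv.apply_symm_apply]; exact hy
      · show eL (e.symm y) = y
        rw [heL]
        exact e.apply_symm_apply y
  have := (eL.submoduleMap (𝒜 n)).finrank_eq
  rw [this, hmap, finrank_homogeneousSubmodule]

end Part2


open MvPolynomial

section Glue

variable {k A : Type*} [Field k] [CommRing A] [Algebra k A]
  (𝒜 : ℕ → Submodule k A) [GradedAlgebra 𝒜]



/-- Main part-1 lemma: existence of `d` algebraically independent degree-one elements. -/
theorem exists_indep_degree_one
    (hgen : Algebra.adjoin k ((𝒜 1 : Submodule k A) : Set A) = ⊤)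
    (d : ℕ) (hdim : ringKrullDim A = d) :
    ∃ θ : Fin d → A, (∀ i, θ i ∈ 𝒜 1) ∧
      (∀ f : MvPolynomial (Fin d) k, aeval θ f = 0 → f = 0) := by
  classical
  have hnt : Nontrivial A := by
    rcases subsingleton_or_nontrivial A with h | h
    · rw [ringKrullDim_eq_bot_of_subsingleton] at hdim
      simp at hdim
    · exact h
  haveI : Nonempty (PrimeSpectrum A) := inferInstance
  haveI : Nonempty (LTSeries (PrimeSpectrum A)) :=
    ⟨RelSeries.singleton _ (Nonempty.some inferInstance)⟩
  -- get a chain of primes of length d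
  have hsup : sSup (Set.range (fun p : LTSeries (PrimeSpectrum A) => (p.length : ℕ∞))) = (d : ℕ∞) := by
    rw [ringKrullDim, Order.krullDim_eq_iSup_length] at hdim
    rw [← sSup_range] at hdim
    norm_cast at hdim
  haveI : Nonempty ↑(Set.range (fun p : LTSeries (PrimeSpectrum A) => (p.length : ℕ∞))) :=
    Set.range_nonempty _ |>.to_subtype
  have hmem := ENat.sSup_mem_of_nonempty_of_lt_top
    (s := Set.range (fun p : LTSeries (PrimeSpectrum A) => (p.length : ℕ∞)))
    (by rw [hsup]; exact ENat.coe_lt_top _)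
  rw [hsup] at hmem
  obtain ⟨p, hp⟩ := hmem
  have hp' : (p.length : ℕ∞) = (d : ℕ∞) := hp
  have hplen : p.length = d := by exact_mod_cast hp'
  -- the chain of primes
  set q : Fin (d + 1) → Ideal A := fun i => (p ⟨(i : ℕ), by omega⟩).asIdeal with hq
  have hqprime : ∀ i, (q i).IsPrime := fun i => (p _).isPrime
  have hqmono : StrictMono q := by
    intro i j hij
    exact p.strictMono (by simpa using hij)
  obtain ⟨x, hx⟩ := chain_indep_mod (k := k) d q hqprime hqmono
  haveI hq0p : (q 0).IsPrime := hqprime 0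
  -- move to the fraction field of A ⧸ q 0
  set D := A ⧸ (q 0) with hD
  set L := FractionRing D with hL
  set φ : A →ₐ[k] L := (IsScalarTower.toAlgHom k D L).comp (Ideal.Quotient.mkₐ k (q 0)) with hφ
  have hφker : ∀ y : A, φ y = 0 ↔ y ∈ q 0 := by
    intro y
    constructor
    · intro h
      have : (algebraMap D L) (Ideal.Quotient.mk (q 0) y) = 0 := h
      rw [map_eq_zero_iff _ (IsFractionRing.injective D L)] at this
      rwa [← Ideal.Quotient.eq_zero_iff_mem]
    · intro h
      have : Ideal.Quotient.mk (q 0) y = 0 := Ideal.Quotient.eq_zero_iff_mem.2 h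
      show (algebraMap D L) (Ideal.Quotient.mk (q 0) y) = 0
      rw [this, map_zero]
  have haevalφ : ∀ (m : ℕ) (y : Fin m → A) (f : MvPolynomial (Fin m) k),
      aeval (fun i => φ (y i)) f = φ (aeval y f) := by
    intro m y f
    rw [← MvPolynomial.comp_aeval]
    rfl
  have hindep : AlgebraicIndependent k (fun i => φ (x i)) := by
    rw [algebraicIndependent_iff]
    intro f hf
    rw [haevalφ] at hf
    exact hx f ((hφker _).1 hf)
  -- elements are in the adjoin of the image of 𝒜 1
  have hmemadj : ∀ i, φ (x i) ∈ Algebra.adjoin k (φ '' ((𝒜 1 : Submodule k A) : Set A)) := by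
    intro i
    rw [Algebra.adjoin_image]
    exact ⟨x i, by rw [hgen]; trivial, rfl⟩
  classical
  obtain ⟨w, hwS, hwind⟩ := exchange_all (k := k) (φ '' ((𝒜 1 : Submodule k A) : Set A)) _
    (fun i => φ (x i)) hindep hmemadj rfl
  choose θ hθ1 hθ2 using hwS
  refine ⟨θ, hθ1, ?_⟩
  intro f hf
  have : aeval (fun i => φ (θ i)) f = 0 := by
    rw [haevalφ, hf, map_zero]
  have hwθ : (fun i => φ (θ i)) = w := funext fun i => hθ2 i
  rw [hwθ] at this
  exact algebraicIndependent_iff.1 hwind f this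

end Glue

end Aux

theorem stmt5 {k A : Type*} [Field k] [CommRing A] [Algebra k A]
    (𝒜 : ℕ → Submodule k A) [GradedAlgebra 𝒜]
    (hfg : Algebra.FiniteType k A)
    (hgen : Algebra.adjoin k ((𝒜 1 : Submodule k A) : Set A) = ⊤)
    (d : ℕ) (hdim : ringKrullDim A = d) :
    (∀ n : ℕ, phiFn d n ≤ Module.finrank k (𝒜 n)) ∧
    ((∀ n : ℕ, Module.finrank k (𝒜 n) = phiFn d n) ↔
      ∃ e : A ≃ₐ[k] MvPolynomial (Fin d) k, ∀ (n : ℕ) (x : A),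
        x ∈ 𝒜 n ↔ e x ∈ MvPolynomial.homogeneousSubmodule (Fin d) k n) := by
  have hFD : ∀ n, FiniteDimensional k (𝒜 n) := finiteDimensional_graded 𝒜 hfg hgen
  obtain ⟨θ, hθ1, hθind⟩ := exists_indep_degree_one 𝒜 hgen d hdim
  constructor
  · intro n
    haveI := hFD n
    exact phiFn_le_finrank_graded 𝒜 θ hθ1 hθind
  · constructor
    · intro heq
      exact part2_forward 𝒜 hgen hFD heq
    · rintro ⟨e, he⟩ n
      exact part2_backward 𝒜 e he n
end

section
/- Let a = (a_1 ≥ a_2 ≥ … ≥ a_s ≥ 0) and b = (b_1 ≥ b_2 ≥ … ≥ b_t ≥ 0) be weakly decreasing tuples of nonnegative integers (s, t ≥ 1), with associated Macaulay polynomials P_a and P_b. Then P_a(n) ≥ P_b(n) for all sufficiently large n if and only if a ≥ b in the lexicographic order, where the shorter tuple is padded on the right with entries −∞ until both tuples have the same length. In particular, the map a ↦ P_a is injective, and the set of Macaulay polynomials is totally ordered by eventual comparison. -/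
/-- The value at the integer `n` of the Macaulay polynomial
`P_a(T) = Σ_{i=1}^{s} binom(T + a_i − i + 1, a_i)` associated to a weakly decreasing
tuple `a = (a_1 ≥ … ≥ a_s ≥ 0)` (here indexed by `i : Fin s`, zero-based, so the
`i`-th summand is `binom(T + a_i − i, a_i)` evaluated at `n`). -/
noncomputable def macaulayEval {s : ℕ} (a : Fin s → ℕ) (n : ℤ) : ℚ :=
  ∑ i : Fin s,
    (∏ j ∈ Finset.range (a i), ((n : ℚ) + (a i : ℚ) - (i : ℕ) - (j : ℚ))) /
      (Nat.factorial (a i) : ℚ)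

/-- The tuple `a : Fin s → ℕ` padded on the right with `⊥ = −∞`. -/
def padTuple {s : ℕ} (a : Fin s → ℕ) : ℕ → WithBot ℕ :=
  fun i => if h : i < s then ((a ⟨i, h⟩ : ℕ) : WithBot ℕ) else ⊥

/-- Lexicographic comparison `f ≥ g` of sequences with values in `WithBot ℕ`. -/
def LexGe (f g : ℕ → WithBot ℕ) : Prop :=
  f = g ∨ ∃ i : ℕ, (∀ j < i, f j = g j) ∧ g i < f i


open Polynomial Filter Finset

noncomputable def qpoly (c k : ℕ) : Polynomial ℚ :=
  Polynomial.C ((Nat.factorial c : ℚ)⁻¹) *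
    ∏ j ∈ Finset.range c, (Polynomial.X + Polynomial.C ((c : ℚ) - k - j))

lemma qpoly_eval (c k : ℕ) (x : ℚ) :
    (qpoly c k).eval x =
      (∏ j ∈ Finset.range c, (x + (c : ℚ) - (k : ℚ) - (j : ℚ))) / (Nat.factorial c : ℚ) := by
  rw [qpoly, eval_mul, eval_C, eval_prod, div_eq_inv_mul]
  congr 1
  refine Finset.prod_congr rfl fun j _ => ?_
  simp only [eval_add, eval_X, eval_C]
  ring

lemma qprod_monic (c k : ℕ) :
    (∏ j ∈ Finset.range c, (X + C ((c : ℚ) - k - j))).Monic :=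
  monic_prod_of_monic _ _ fun j _ => monic_X_add_C _

lemma qprod_natDegree (c k : ℕ) :
    (∏ j ∈ Finset.range c, (X + C ((c : ℚ) - k - j))).natDegree = c := by
  rw [natDegree_prod _ _ fun j _ => (monic_X_add_C _).ne_zero]
  simp only [natDegree_X_add_C, Finset.sum_const, Finset.card_range, smul_eq_mul, mul_one]

lemma qpoly_natDegree (c k : ℕ) : (qpoly c k).natDegree = c := by
  rw [qpoly, natDegree_C_mul (by positivity : ((Nat.factorial c : ℚ)⁻¹) ≠ 0),
    qprod_natDegree]

lemma qpoly_coeff_self (c k : ℕ) : (qpoly c k).coeff c = (Nat.factorial c : ℚ)⁻¹ := by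
  rw [qpoly, coeff_C_mul]
  have h1 : (∏ j ∈ Finset.range c, (X + C ((c : ℚ) - k - j))).coeff c = 1 := by
    have := (qprod_monic c k).coeff_natDegree
    rwa [qprod_natDegree] at this
  rw [h1, mul_one]

lemma qpoly_coeff_of_lt {c A : ℕ} (k : ℕ) (h : c < A) : (qpoly c k).coeff A = 0 :=
  coeff_eq_zero_of_natDegree_lt (by rw [qpoly_natDegree]; exact h)

noncomputable def Ppoly {s : ℕ} (a : Fin s → ℕ) : Polynomial ℚ :=
  ∑ i : Fin s, qpoly (a i) i

lemma macaulayEval_eq {s : ℕ} (a : Fin s → ℕ) (n : ℤ) :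
    macaulayEval a n = (Ppoly a).eval (n : ℚ) := by
  unfold macaulayEval Ppoly
  rw [eval_finset_sum]
  exact Finset.sum_congr rfl fun i _ => (qpoly_eval _ _ _).symm

/-- ℕ-indexed version of the summands. -/
noncomputable def gfun {s : ℕ} (a : Fin s → ℕ) : ℕ → Polynomial ℚ :=
  fun j => if h : j < s then qpoly (a ⟨j, h⟩) j else 0

lemma Ppoly_eq {s : ℕ} (a : Fin s → ℕ) :
    Ppoly a = ∑ j ∈ Finset.range s, gfun a j := by
  rw [Ppoly, ← Fin.sum_univ_eq_sum_range (gfun a)]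
  refine Finset.sum_congr rfl fun i _ => ?_
  simp [gfun, i.isLt]

/-- Key lemma: strict first lexicographic difference gives eventual strict domination. -/
lemma key {s t : ℕ} (a : Fin s → ℕ) (b : Fin t → ℕ) (ha : Antitone a) (hb : Antitone b)
    (i : ℕ) (hpref : ∀ j < i, padTuple a j = padTuple b j)
    (hlt : padTuple b i < padTuple a i) :
    ∃ N : ℤ, ∀ n ≥ N, macaulayEval b n < macaulayEval a n := by
  classical
  have his : i < s := by
    by_contra h
    simp only [padTuple] at hlt
    rw [dif_neg h] at hlt
    exact not_lt_bot hlt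
  set A : ℕ := a ⟨i, his⟩ with hA
  -- b-tail values are < A
  have hbA : ∀ j : Fin t, i ≤ (j : ℕ) → b j < A := by
    intro j hij
    have hit : i < t := lt_of_le_of_lt hij j.isLt
    have h1 : ((b ⟨i, hit⟩ : ℕ) : WithBot ℕ) < ((A : ℕ) : WithBot ℕ) := by
      rw [padTuple, padTuple, dif_pos his, dif_pos hit] at hlt
      exact hlt
    have h2 : b ⟨i, hit⟩ < A := by exact_mod_cast h1
    exact lt_of_le_of_lt (hb (Fin.le_def.mpr hij)) h2
  have haA : ∀ j : Fin s, i ≤ (j : ℕ) → a j ≤ A := fun j hij => ha (Fin.le_def.mpr hij)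
  -- prefix agreement as naturals
  have hpref' : ∀ j, ∀ hji : j < i, ∃ hjt : j < t,
      a ⟨j, lt_trans hji his⟩ = b ⟨j, hjt⟩ := by
    intro j hji
    have hj := hpref j hji
    have hjs := lt_trans hji his
    by_cases hjt : j < t
    · refine ⟨hjt, ?_⟩
      rw [padTuple, padTuple, dif_pos hjs, dif_pos hjt] at hj
      exact_mod_cast hj
    · rw [padTuple, padTuple, dif_pos hjs, dif_neg hjt] at hj
      exact absurd hj (by simp)
  have hile_t : i ≤ t := by
    by_contra h
    push_neg at h
    obtain ⟨hjt, _⟩ := hpref' t h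
    exact lt_irrefl t hjt
  have hile_s : i ≤ s := le_of_lt his
  -- split the sums
  have hsplit : ∀ (m : ℕ) (him : i ≤ m) (g : ℕ → Polynomial ℚ),
      ∑ j ∈ Finset.range m, g j =
        ∑ j ∈ Finset.range i, g j + ∑ j ∈ Finset.Ico i m, g j := by
    intro m him g
    rw [Finset.range_eq_Ico]
    rw [Finset.range_eq_Ico]; exact (Finset.sum_Ico_consecutive (f := g) (Nat.zero_le i) him).symm
  have hprefsum : ∑ j ∈ Finset.range i, gfun a j = ∑ j ∈ Finset.range i, gfun b j := by
    refine Finset.sum_congr rfl fun j hj => ?_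
    have hji : j < i := Finset.mem_range.mp hj
    obtain ⟨hjt, hab⟩ := hpref' j hji
    have hjs := lt_trans hji his
    simp [gfun, hjs, hjt, hab]
  set Sa := ∑ j ∈ Finset.Ico i s, gfun a j with hSa
  set Sb := ∑ j ∈ Finset.Ico i t, gfun b j with hSb
  set D : Polynomial ℚ := Ppoly a - Ppoly b with hDdef
  have hD : D = Sa - Sb := by
    rw [hDdef, Ppoly_eq, Ppoly_eq, hsplit s hile_s, hsplit t hile_t, hprefsum]
    ring
  -- coeff A of Sb is zero
  have hSbc : Sb.coeff A = 0 := by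
    rw [hSb, Polynomial.finset_sum_coeff]
    refine Finset.sum_eq_zero fun j hj => ?_
    obtain ⟨hij, hjt⟩ := Finset.mem_Ico.mp hj
    have : gfun b j = qpoly (b ⟨j, hjt⟩) j := dif_pos hjt
    rw [this]
    exact qpoly_coeff_of_lt _ (hbA ⟨j, hjt⟩ hij)
  -- coeff A of Sa is at least 1/A!
  have hSac : (Nat.factorial A : ℚ)⁻¹ ≤ Sa.coeff A := by
    rw [hSa, Polynomial.finset_sum_coeff]
    have hterm : ∀ j ∈ Finset.Ico i s, 0 ≤ (gfun a j).coeff A := by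
      intro j hj
      obtain ⟨hij, hjs⟩ := Finset.mem_Ico.mp hj
      rw [show gfun a j = qpoly (a ⟨j, hjs⟩) j from dif_pos hjs]
      rcases lt_or_eq_of_le (haA ⟨j, hjs⟩ hij) with h | h
      · rw [qpoly_coeff_of_lt _ h]
      · rw [h, qpoly_coeff_self]
        positivity
    have hmem : i ∈ Finset.Ico i s := Finset.mem_Ico.mpr ⟨le_refl i, his⟩
    have hival : (gfun a i).coeff A = (Nat.factorial A : ℚ)⁻¹ := by
      rw [show gfun a i = qpoly (a ⟨i, his⟩) i from dif_pos his, ← hA, qpoly_coeff_self]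
    calc (Nat.factorial A : ℚ)⁻¹ = (gfun a i).coeff A := hival.symm
      _ ≤ ∑ j ∈ Finset.Ico i s, (gfun a j).coeff A := Finset.single_le_sum hterm hmem
  have hDc : 0 < D.coeff A := by
    rw [hD, Polynomial.coeff_sub, hSbc, sub_zero]
    exact lt_of_lt_of_le (by positivity) hSac
  -- natDegree of D is at most A
  have hSadeg : Sa.natDegree ≤ A := by
    rw [hSa]
    refine natDegree_sum_le_of_forall_le _ _ fun j hj => ?_
    obtain ⟨hij, hjs⟩ := Finset.mem_Ico.mp hj
    rw [show gfun a j = qpoly (a ⟨j, hjs⟩) j from dif_pos hjs, qpoly_natDegree]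
    exact haA ⟨j, hjs⟩ hij
  have hSbdeg : Sb.natDegree ≤ A := by
    rw [hSb]
    refine natDegree_sum_le_of_forall_le _ _ fun j hj => ?_
    obtain ⟨hij, hjt⟩ := Finset.mem_Ico.mp hj
    rw [show gfun b j = qpoly (b ⟨j, hjt⟩) j from dif_pos hjt, qpoly_natDegree]
    exact le_of_lt (hbA ⟨j, hjt⟩ hij)
  have hDdeg : D.natDegree ≤ A := by
    rw [hD]
    exact le_trans (natDegree_sub_le _ _) (max_le hSadeg hSbdeg)
  have hDne : D ≠ 0 := fun h => by simp [h] at hDc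
  have hDnatdeg : D.natDegree = A :=
    le_antisymm hDdeg (le_natDegree_of_ne_zero (ne_of_gt hDc))
  have hlc : 0 < D.leadingCoeff := by rwa [leadingCoeff, hDnatdeg]
  -- eventual positivity of eval
  have hev : ∀ᶠ x : ℚ in atTop, 0 < D.eval x := by
    rcases Nat.eq_zero_or_pos A with hA0 | hApos
    · have : D = Polynomial.C (D.coeff 0) :=
        Polynomial.eq_C_of_natDegree_le_zero (by rw [hDnatdeg, hA0])
      refine Filter.Eventually.of_forall fun x => ?_
      rw [this]
      simp only [eval_C]
      rwa [hA0] at hDc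
    · have hdeg : 0 < D.degree := by
        rw [degree_eq_natDegree hDne, hDnatdeg]
        exact_mod_cast hApos
      have := Polynomial.tendsto_atTop_of_leadingCoeff_nonneg D hdeg hlc.le
      exact this.eventually_gt_atTop 0
  obtain ⟨M, hM⟩ := Filter.eventually_atTop.mp hev
  refine ⟨⌈M⌉, fun n hn => ?_⟩
  have hx : M ≤ (n : ℚ) := by
    calc M ≤ (⌈M⌉ : ℚ) := Int.le_ceil M
      _ ≤ (n : ℚ) := by exact_mod_cast hn
  have := hM (n : ℚ) hx
  rw [hDdef, eval_sub, sub_pos] at this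
  rwa [macaulayEval_eq, macaulayEval_eq]

lemma pad_eq_eval {s t : ℕ} (a : Fin s → ℕ) (b : Fin t → ℕ)
    (h : padTuple a = padTuple b) : ∀ n, macaulayEval a n = macaulayEval b n := by
  have hst : s = t := by
    by_contra hne
    rcases Nat.lt_or_ge s t with hlt | hge
    · have := congrFun h s
      rw [padTuple, padTuple, dif_neg (lt_irrefl s), dif_pos hlt] at this
      exact absurd this.symm (by simp)
    · have hts : t < s := lt_of_le_of_ne hge (Ne.symm hne)
      have := congrFun h t
      rw [padTuple, padTuple, dif_pos hts, dif_neg (lt_irrefl t)] at this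
      exact absurd this (by simp)
  subst hst
  have hab : a = b := by
    funext j
    have := congrFun h j
    rw [padTuple, padTuple, dif_pos j.isLt, dif_pos j.isLt] at this
    have h2 : a ⟨(j : ℕ), j.isLt⟩ = b ⟨(j : ℕ), j.isLt⟩ := by exact_mod_cast this
    simpa using h2
  rw [hab]
  exact fun _ => rfl

lemma trich (f g : ℕ → WithBot ℕ) :
    f = g ∨ (∃ i, (∀ j < i, f j = g j) ∧ g i < f i) ∨
      (∃ i, (∀ j < i, f j = g j) ∧ f i < g i) := by
  classical
  by_cases h : f = g
  · exact Or.inl h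
  right
  have hne : ∃ i, f i ≠ g i := by
    by_contra hc
    push_neg at hc
    exact h (funext hc)
  have hi : f (Nat.find hne) ≠ g (Nat.find hne) := Nat.find_spec hne
  have hj : ∀ j < Nat.find hne, f j = g j := fun j hjlt =>
    not_not.mp (Nat.find_min hne hjlt)
  rcases lt_or_gt_of_ne hi with h1 | h1
  · exact Or.inr ⟨Nat.find hne, hj, h1⟩
  · exact Or.inl ⟨Nat.find hne, hj, h1⟩

theorem stmt7 {s t : ℕ} (hs : 1 ≤ s) (ht : 1 ≤ t)
    (a : Fin s → ℕ) (b : Fin t → ℕ) (ha : Antitone a) (hb : Antitone b) :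
    -- eventual domination of Macaulay polynomials is lexicographic comparison:
    ((∃ N : ℤ, ∀ n ≥ N, macaulayEval b n ≤ macaulayEval a n) ↔
      LexGe (padTuple a) (padTuple b)) ∧
    -- in particular a ↦ P_a is injective:
    ((∃ N : ℤ, ∀ n ≥ N, macaulayEval a n = macaulayEval b n) →
      padTuple a = padTuple b) ∧
    -- and the set of Macaulay polynomials is totally ordered by eventual comparison:
    ((∃ N : ℤ, ∀ n ≥ N, macaulayEval b n ≤ macaulayEval a n) ∨
      (∃ N : ℤ, ∀ n ≥ N, macaulayEval a n ≤ macaulayEval b n)) := by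
  obtain h | ⟨i, hpre, hlt⟩ | ⟨i, hpre, hlt⟩ := trich (padTuple a) (padTuple b)
  · have heq := pad_eq_eval a b h
    exact ⟨⟨fun _ => Or.inl h, fun _ => ⟨0, fun n _ => (heq n).ge⟩⟩, fun _ => h,
      Or.inl ⟨0, fun n _ => (heq n).ge⟩⟩
  · obtain ⟨N, hN⟩ := key a b ha hb i hpre hlt
    refine ⟨⟨fun _ => Or.inr ⟨i, hpre, hlt⟩, fun _ => ⟨N, fun n hn => (hN n hn).le⟩⟩,
      ?_, Or.inl ⟨N, fun n hn => (hN n hn).le⟩⟩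
    rintro ⟨M, hM⟩
    exact absurd (hM (max N M) (le_max_right _ _)) (hN (max N M) (le_max_left _ _)).ne'
  · obtain ⟨N, hN⟩ := key b a hb ha i (fun j hj => (hpre j hj).symm) hlt
    have hnotlex : ¬ LexGe (padTuple a) (padTuple b) := by
      rintro (he | ⟨k, hk, hk2⟩)
      · rw [he] at hlt
        exact lt_irrefl _ hlt
      · rcases lt_trichotomy k i with h | h | h
        · rw [hpre k h] at hk2
          exact lt_irrefl _ hk2
        · subst h
          exact lt_asymm hlt hk2
        · rw [hk i h] at hlt
          exact lt_irrefl _ hlt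
    refine ⟨iff_of_false ?_ hnotlex, ?_, Or.inr ⟨N, fun n hn => (hN n hn).le⟩⟩
    · rintro ⟨M, hM⟩
      exact absurd (hM (max N M) (le_max_right _ _))
        (not_le.mpr (hN (max N M) (le_max_left _ _)))
    · rintro ⟨M, hM⟩
      exact absurd (hM (max N M) (le_max_right _ _)) (hN (max N M) (le_max_left _ _)).ne
end

section
/- Let X be a noetherian topological space of finite Krull dimension in which every nonempty irreducible closed subset has a generic point, let (G, ≤) be a partially ordered set, and let H : X → G be a map. Assume: (1) whenever x lies in the closure of {y}, one has H(x) ≥ H(y); and (2) for every y ∈ X there is a dense open subset U of the closure of {y} such that H(x) = H(y) for all x ∈ U. Then H is upper semi-continuous, i.e. for every ν ∈ G the set X_{≥ν} = {x ∈ X : H(x) ≥ ν} is closed in X. -/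
theorem stmt9 {X G : Type*} [TopologicalSpace X] [TopologicalSpace.NoetherianSpace X]
    [PartialOrder G]
    -- X has finite Krull dimension:
    (hdim : topologicalKrullDim X < ⊤)
    -- X is Zariski: every nonempty irreducible closed subset has a generic point:
    (hgen : ∀ C : Set X, IsIrreducible C → IsClosed C → ∃ x : X, closure {x} = C)
    (H : X → G)
    -- (1) specialization increases H:
    (h1 : ∀ x y : X, x ∈ closure ({y} : Set X) → H y ≤ H x)
    -- (2) H is generically constant: for every y there is a dense open subset U of
    -- the closure of {y} on which H is constant equal to H y:
    (h2 : ∀ y : X, ∃ U : Set X, U ⊆ closure ({y} : Set X) ∧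
      IsOpen ((fun z : closure ({y} : Set X) => (z : X)) ⁻¹' U) ∧
      Dense ((fun z : closure ({y} : Set X) => (z : X)) ⁻¹' U) ∧
      ∀ x ∈ U, H x = H y) :
    -- then H is upper semi-continuous:
    ∀ ν : G, IsClosed {x : X | ν ≤ H x} := by
  intro ν
  set S := {x : X | ν ≤ H x} with hS
  suffices h : ∀ Z : TopologicalSpace.Closeds X, IsClosed (S ∩ (Z : Set X)) by
    simpa using h ⊤
  intro Z
  apply WellFounded.induction (wellFounded_lt (α := TopologicalSpace.Closeds X)) Z
  clear Z
  intro Z IH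
  by_cases hne : (Z : Set X).Nonempty
  · by_cases hirr : IsPreirreducible (Z : Set X)
    · -- Z irreducible: take a generic point η
      obtain ⟨η, hη⟩ := hgen Z ⟨hne, hirr⟩ Z.isClosed
      by_cases hν : ν ≤ H η
      · -- everything in Z lies in S
        have hsub : (Z : Set X) ⊆ S := fun x hx => le_trans hν (h1 x η (hη ▸ hx))
        rw [Set.inter_eq_right.mpr hsub]
        exact Z.isClosed
      · -- H < ν generically; S ∩ Z lies in a proper closed subset
        obtain ⟨U, hUZ, hUopen, hUdense, hUconst⟩ := h2 η
        rw [hη] at hUZ hUopen hUdense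
        obtain ⟨V, hVopen, hVU⟩ := isOpen_induced_iff.mp hUopen
        have hUV : U = V ∩ (Z : Set X) := by
          ext x
          constructor
          · intro hx
            have hxZ := hUZ hx
            have : (⟨x, hxZ⟩ : (Z : Set X)) ∈ Subtype.val ⁻¹' V := by
              rw [hVU]; exact hx
            exact ⟨this, hxZ⟩
          · rintro ⟨hxV, hxZ⟩
            have : (⟨x, hxZ⟩ : (Z : Set X)) ∈ Subtype.val ⁻¹' V := hxV
            rw [hVU] at this; exact this
        have hηZ : η ∈ (Z : Set X) := hη ▸ subset_closure rfl
        have : Nonempty (Z : Set X) := ⟨⟨η, hηZ⟩⟩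
        obtain ⟨⟨u, huZ⟩, huU⟩ := hUdense.nonempty
        have huU : u ∈ U := huU
        set Z' : TopologicalSpace.Closeds X :=
          ⟨(Z : Set X) ∩ Vᶜ, Z.isClosed.inter hVopen.isClosed_compl⟩ with hZ'
        have hlt : Z' < Z := by
          refine lt_of_le_of_ne (fun x hx => hx.1) ?_
          intro heq
          have : u ∈ (Z' : Set X) := by rw [show ((Z' : TopologicalSpace.Closeds X) : Set X) = (Z : Set X) from congrArg _ heq]; exact huZ
          exact this.2 (hUV ▸ huU).1
        have hSZ : S ∩ (Z : Set X) = S ∩ (Z' : Set X) := by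
          ext x
          constructor
          · rintro ⟨hxS, hxZ⟩
            refine ⟨hxS, hxZ, fun hxV => ?_⟩
            have hxU : x ∈ U := hUV ▸ ⟨hxV, hxZ⟩
            exact hν (le_trans hxS (le_of_eq (hUconst x hxU)))
          · rintro ⟨hxS, hxZ, _⟩
            exact ⟨hxS, hxZ⟩
        rw [hSZ]
        exact IH Z' hlt
    · -- Z reducible: split into two proper closed pieces
      simp only [IsPreirreducible, not_forall] at hirr
      obtain ⟨u, v, hu, hv, hZu, hZv, hZuv⟩ := hirr
      have hZuv' : (Z : Set X) ∩ (u ∩ v) = ∅ := Set.not_nonempty_iff_eq_empty.mp hZuv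
      set Z₁ : TopologicalSpace.Closeds X := ⟨(Z : Set X) ∩ uᶜ, Z.isClosed.inter hu.isClosed_compl⟩
      set Z₂ : TopologicalSpace.Closeds X := ⟨(Z : Set X) ∩ vᶜ, Z.isClosed.inter hv.isClosed_compl⟩
      have hlt₁ : Z₁ < Z := by
        refine lt_of_le_of_ne (fun x hx => hx.1) ?_
        intro heq
        obtain ⟨x, hxZ, hxu⟩ := hZu
        have : x ∈ ((Z₁ : TopologicalSpace.Closeds X) : Set X) := by
          rw [show ((Z₁ : TopologicalSpace.Closeds X) : Set X) = (Z : Set X) from congrArg _ heq]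
          exact hxZ
        exact this.2 hxu
      have hlt₂ : Z₂ < Z := by
        refine lt_of_le_of_ne (fun x hx => hx.1) ?_
        intro heq
        obtain ⟨x, hxZ, hxv⟩ := hZv
        have : x ∈ ((Z₂ : TopologicalSpace.Closeds X) : Set X) := by
          rw [show ((Z₂ : TopologicalSpace.Closeds X) : Set X) = (Z : Set X) from congrArg _ heq]
          exact hxZ
        exact this.2 hxv
      have hsplit : S ∩ (Z : Set X) = (S ∩ (Z₁ : Set X)) ∪ (S ∩ (Z₂ : Set X)) := by
        ext x
        constructor
        · rintro ⟨hxS, hxZ⟩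
          by_cases hxu : x ∈ u
          · refine Or.inr ⟨hxS, hxZ, fun hxv => ?_⟩
            have : x ∈ (Z : Set X) ∩ (u ∩ v) := ⟨hxZ, hxu, hxv⟩
            simp [hZuv'] at this
          · exact Or.inl ⟨hxS, hxZ, hxu⟩
        · rintro (⟨hxS, hxZ, _⟩ | ⟨hxS, hxZ, _⟩) <;> exact ⟨hxS, hxZ⟩
      rw [hsplit]
      exact (IH Z₁ hlt₁).union (IH Z₂ hlt₂)
  · rw [Set.not_nonempty_iff_eq_empty.mp hne, Set.inter_empty]
    exact isClosed_empty
end
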